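/- arXiv:0707.0915 — 5 statements merged into one kernel-verified Lean document; each statement's English description precedes it below -/
import Mathlib

section
/- Let k be a field of characteristic p > 2, let 0 ≤ e < p, and let d ≤ (N+1)·(p−1)/2 − e. Then the degree-d graded piece of the colon ideal ((x_0^p,...,x_N^p) : (∑_{i=0}^N x_i^2)^e) in k[x_0,...,x_N] equals the degree-d graded piece of the ideal (x_0^p,...,x_N^p, (∑_{i=0}^N x_i^2)^{p−e}). -/
open MvPolynomial

set_option linter.unusedSectionVars false

namespace ColonAux

variable {k : Type*} [Field k] {p : ℕ} [Fact p.Prime] [CharP k p]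

lemma isHomo_iff {σ : Type*} {f : MvPolynomial σ k} {c : ℕ} :
    f.IsHomogeneous c ↔ ∀ d : σ →₀ ℕ, coeff d f ≠ 0 → d.degree = c := by
  unfold MvPolynomial.IsHomogeneous MvPolynomial.IsWeightedHomogeneous
  simp [Finsupp.degree_eq_weight_one]
  rfl

variable (k) in
noncomputable def Qq (n : ℕ) : MvPolynomial (Fin (n+1)) k := ∑ i, X i ^ 2

variable (k p) in
noncomputable def Ii (n : ℕ) : Ideal (MvPolynomial (Fin (n+1)) k) :=
  Ideal.span (Set.range fun i => X i ^ p)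

noncomputable def DD {n : ℕ} (f : MvPolynomial (Fin (n+1)) k) : MvPolynomial (Fin (n+1)) k :=
  ∑ i, pderiv i (pderiv i f)

lemma Qq_homo (n : ℕ) : (Qq k n).IsHomogeneous 2 := by
  apply MvPolynomial.IsHomogeneous.sum
  intro i _
  simpa using (isHomogeneous_X k i).pow 2

lemma Qq_pow_homo (n r : ℕ) : (Qq k n ^ r).IsHomogeneous (2 * r) :=
  (Qq_homo n).pow r

lemma Xp_mem (n : ℕ) (i : Fin (n+1)) : (X i : MvPolynomial (Fin (n+1)) k) ^ p ∈ Ii k p n :=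
  Ideal.subset_span ⟨i, rfl⟩

lemma Qp_mem (n : ℕ) : Qq k n ^ p ∈ Ii k p n := by
  have : Qq k n ^ p = ∑ i : Fin (n+1), ((X i : MvPolynomial (Fin (n+1)) k) ^ p) ^ 2 := by
    rw [Qq, sum_pow_char]
    congr 1; funext i; rw [← pow_mul, ← pow_mul, mul_comm]
  rw [this]
  exact Ideal.sum_mem _ fun i _ => by
    rw [pow_two]; exact Ideal.mul_mem_left _ _ (Xp_mem n i)

lemma Ii_mem_iff {n : ℕ} {x : MvPolynomial (Fin (n+1)) k} :
    x ∈ Ii k p n ↔ ∃ r : Fin (n+1) → MvPolynomial (Fin (n+1)) k,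
      ∑ i, r i * X i ^ p = x := by
  rw [Ii, Ideal.mem_span_range_iff_exists_fun]

/-- homogeneous component of (homogeneous * f) -/
lemma hc_mul_left {n a b : ℕ} {q f : MvPolynomial (Fin (n+1)) k}
    (hq : q.IsHomogeneous a) :
    homogeneousComponent (a + b) (q * f) = q * homogeneousComponent b f := by
  induction f using MvPolynomial.induction_on' with
  | monomial u r =>
    have hm : (monomial u r : MvPolynomial (Fin (n+1)) k).IsHomogeneous u.degree :=
      isHomogeneous_monomial r rfl
    rw [homogeneousComponent_of_mem ((mem_homogeneousSubmodule _ _).2 (hq.mul hm)),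
        homogeneousComponent_of_mem ((mem_homogeneousSubmodule _ _).2 hm)]
    by_cases hb : b = u.degree
    · simp [hb]
    · rw [if_neg (by omega), if_neg hb, mul_zero]
  | add f g hf hg =>
    rw [mul_add, map_add, hf, hg, map_add, mul_add]

lemma hc_mul_left_zero {n a t : ℕ} {q f : MvPolynomial (Fin (n+1)) k}
    (hq : q.IsHomogeneous a) (ht : t < a) :
    homogeneousComponent t (q * f) = 0 := by
  induction f using MvPolynomial.induction_on' with
  | monomial u r =>
    have hm : (monomial u r : MvPolynomial (Fin (n+1)) k).IsHomogeneous u.degree :=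
      isHomogeneous_monomial r rfl
    rw [homogeneousComponent_of_mem ((mem_homogeneousSubmodule _ _).2 (hq.mul hm))]
    rw [if_neg (by omega)]
  | add f g hf hg => rw [mul_add, map_add, hf, hg, add_zero]

lemma hc_self {n c : ℕ} {f : MvPolynomial (Fin (n+1)) k} (hf : f.IsHomogeneous c) :
    homogeneousComponent c f = f := by
  rw [homogeneousComponent_of_mem ((mem_homogeneousSubmodule _ _).2 hf), if_pos rfl]

lemma Ii_hc {n : ℕ} {x : MvPolynomial (Fin (n+1)) k} (hx : x ∈ Ii k p n) (t : ℕ) :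
    homogeneousComponent t x ∈ Ii k p n := by
  obtain ⟨r, rfl⟩ := Ii_mem_iff.1 hx
  rw [map_sum]
  refine Ideal.sum_mem _ fun i _ => ?_
  have hxp : ((X i : MvPolynomial (Fin (n+1)) k) ^ p).IsHomogeneous p := by
    simpa using (isHomogeneous_X k i).pow p
  rw [mul_comm]
  by_cases hpt : p ≤ t
  · have : t = p + (t - p) := by omega
    rw [this, hc_mul_left hxp]
    exact Ideal.mul_mem_right _ _ (Xp_mem n i)
  · rw [hc_mul_left_zero hxp (by omega)]
    exact Ideal.zero_mem _

end ColonAux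

namespace ColonAux

variable {k : Type*} [Field k] {p : ℕ} [Fact p.Prime] [CharP k p]

lemma sub_single_add {n : ℕ} (v : Fin (n+1) →₀ ℕ) (i : Fin (n+1)) (h : v i ≠ 0) :
    (v - Finsupp.single i 1) + Finsupp.single i 1 = v := by
  ext j
  rcases eq_or_ne i j with rfl | hne
  · simp [Finsupp.sub_apply, Finsupp.single_apply]; omega
  · simp [Finsupp.sub_apply, Finsupp.single_apply, hne]

lemma degree_sub_single {n : ℕ} (v : Fin (n+1) →₀ ℕ) (i : Fin (n+1)) (h : v i ≠ 0) :
    (v - Finsupp.single i 1).degree + 1 = v.degree := by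
  conv_rhs => rw [← sub_single_add v i h]
  simp [Finsupp.degree_eq_weight_one, map_add, Finsupp.weight_apply, Finsupp.sum_single_index]

lemma pderiv_isHomogeneous {n c : ℕ} {f : MvPolynomial (Fin (n+1)) k} (i : Fin (n+1))
    (hf : f.IsHomogeneous c) : (pderiv i f).IsHomogeneous (c - 1) := by
  conv_lhs => rw [← support_sum_monomial_coeff f]
  rw [map_sum]
  apply MvPolynomial.IsHomogeneous.sum
  intro v hv
  rw [pderiv_monomial]
  by_cases hvi : v i = 0
  · simp [hvi]
    exact isHomogeneous_zero _ _ _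
  · apply isHomogeneous_monomial
    have hdeg : v.degree = c := isHomo_iff.1 hf v (mem_support_iff.1 hv)
    have := degree_sub_single v i hvi
    omega

lemma pderiv_zero_of_homo_zero {n : ℕ} {f : MvPolynomial (Fin (n+1)) k} (i : Fin (n+1))
    (hf : f.IsHomogeneous 0) : pderiv i f = 0 := by
  conv_lhs => rw [← support_sum_monomial_coeff f]
  rw [map_sum]
  apply Finset.sum_eq_zero
  intro v hv
  have hdeg : v.degree = 0 := isHomo_iff.1 hf v (mem_support_iff.1 hv)
  have hvi : v i = 0 := by
    by_contra hvi
    have := degree_sub_single v i hvi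
    omega
  rw [pderiv_monomial]
  simp [hvi]

lemma DD_zero_of_low {n c : ℕ} {f : MvPolynomial (Fin (n+1)) k} (hc : c ≤ 1)
    (hf : f.IsHomogeneous c) : DD f = 0 := by
  apply Finset.sum_eq_zero
  intro i _
  rcases Nat.le_one_iff_eq_zero_or_eq_one.1 hc with rfl | rfl
  · rw [pderiv_zero_of_homo_zero i hf, map_zero]
  · exact pderiv_zero_of_homo_zero i (by simpa using pderiv_isHomogeneous i hf)

lemma DD_isHomogeneous {n c : ℕ} {f : MvPolynomial (Fin (n+1)) k}
    (hf : f.IsHomogeneous c) : (DD f).IsHomogeneous (c - 2) := by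
  apply MvPolynomial.IsHomogeneous.sum
  intro i _
  have := pderiv_isHomogeneous i (pderiv_isHomogeneous i hf)
  simpa [Nat.sub_sub] using this

lemma DD_add {n : ℕ} (f g : MvPolynomial (Fin (n+1)) k) : DD (f + g) = DD f + DD g := by
  unfold DD
  rw [← Finset.sum_add_distrib]
  congr 1; funext i; rw [map_add, map_add]

lemma DD_mul_C {n : ℕ} (a : k) (f : MvPolynomial (Fin (n+1)) k) :
    DD (C a * f) = C a * DD f := by
  unfold DD
  rw [Finset.mul_sum]
  congr 1; funext i
  rw [show (C a : MvPolynomial (Fin (n+1)) k) * f = a • f by rw [smul_eq_C_mul],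
      (pderiv i).map_smul, (pderiv i).map_smul, smul_eq_C_mul]

lemma DD_mem {n : ℕ} {x : MvPolynomial (Fin (n+1)) k} (hx : x ∈ Ii k p n) :
    DD x ∈ Ii k p n := by
  obtain ⟨r, rfl⟩ := Ii_mem_iff.1 hx
  have key : ∀ (i j : Fin (n+1)) (g : MvPolynomial (Fin (n+1)) k),
      pderiv j (g * X i ^ p) = pderiv j g * X i ^ p := by
    intro i j g
    rw [pderiv_mul]
    have : (pderiv j) ((X i : MvPolynomial (Fin (n+1)) k) ^ p) = 0 := by
      rw [Derivation.leibniz_pow]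
      have hz : (p : MvPolynomial (Fin (n+1)) k) = 0 :=
        CharP.cast_eq_zero (MvPolynomial (Fin (n+1)) k) p
      rw [nsmul_eq_mul, hz]
      ring
    rw [this]
    ring
  have DDsum : ∀ (s : Finset (Fin (n+1))) (f : Fin (n+1) → MvPolynomial (Fin (n+1)) k),
      DD (∑ j ∈ s, f j) = ∑ j ∈ s, DD (f j) := by
    intro s f
    unfold DD
    rw [Finset.sum_comm]
    congr 1; funext i; rw [map_sum, map_sum]
  rw [DDsum]
  refine Ideal.sum_mem _ fun i _ => ?_
  have : DD (r i * X i ^ p) = DD (r i) * (X i : MvPolynomial (Fin (n+1)) k) ^ p := by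
    unfold DD
    rw [Finset.sum_mul]
    congr 1; funext j
    rw [key i j, key i j]
  rw [this]
  exact Ideal.mul_mem_left _ _ (Xp_mem n i)

end ColonAux

namespace ColonAux

variable {k : Type*} [Field k] {p : ℕ} [Fact p.Prime] [CharP k p]

lemma nsmulC {n : ℕ} (m : ℕ) (f : MvPolynomial (Fin (n+1)) k) :
    m • f = C (m : k) * f := by
  rw [nsmul_eq_mul, ← map_natCast (C : k →+* MvPolynomial (Fin (n+1)) k) m]

lemma degree_eq_sum_univ {n : ℕ} (v : Fin (n+1) →₀ ℕ) : v.degree = ∑ i, v i := by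
  simp [Finsupp.degree_eq_weight_one, Finsupp.weight_apply, Finsupp.sum_fintype]

lemma euler_monomial {n : ℕ} (v : Fin (n+1) →₀ ℕ) (a : k) :
    ∑ i, X i * pderiv i (monomial v a) = v.degree • (monomial v a : MvPolynomial (Fin (n+1)) k) := by
  have : ∀ i : Fin (n+1), X i * pderiv i (monomial v a)
      = (v i) • (monomial v a : MvPolynomial (Fin (n+1)) k) := by
    intro i
    rw [pderiv_monomial]
    by_cases hvi : v i = 0
    · simp [hvi]
    · have hadd : (Finsupp.single i 1) + (v - Finsupp.single i 1) = v := by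
        ext j
        rcases eq_or_ne i j with rfl | hne
        · simp [Finsupp.sub_apply, Finsupp.single_apply]; omega
        · simp [Finsupp.sub_apply, Finsupp.single_apply, hne]
      rw [X, monomial_mul]
      simp only [hadd]
      rw [smul_monomial]
      congr 1
      rw [nsmul_eq_mul]; ring
  rw [Finset.sum_congr rfl fun i _ => this i, ← Finset.sum_smul, ← degree_eq_sum_univ]

lemma euler_eq {n c : ℕ} {f : MvPolynomial (Fin (n+1)) k} (hf : f.IsHomogeneous c) :
    ∑ i, X i * pderiv i f = c • f := by
  conv_lhs => rw [← support_sum_monomial_coeff f]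
  have : ∀ i : Fin (n+1), X i * pderiv i (∑ v ∈ f.support, monomial v (coeff v f))
      = ∑ v ∈ f.support, X i * pderiv i (monomial v (coeff v f)) := by
    intro i; rw [map_sum, Finset.mul_sum]
  rw [Finset.sum_congr rfl fun i _ => this i, Finset.sum_comm]
  have : ∀ v ∈ f.support, ∑ i : Fin (n+1), X i * pderiv i (monomial v (coeff v f))
      = c • monomial v (coeff v f) := by
    intro v hv
    rw [euler_monomial, isHomo_iff.1 hf v (mem_support_iff.1 hv)]
  rw [Finset.sum_congr rfl this, ← Finset.smul_sum, support_sum_monomial_coeff]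

lemma pderiv_Qq {n : ℕ} (i : Fin (n+1)) : pderiv i (Qq k n) = 2 * X i := by
  unfold Qq
  rw [map_sum]
  rw [Finset.sum_eq_single i]
  · rw [pow_two, pderiv_mul, pderiv_X_self]; ring
  · intro j _ hji
    rw [pow_two, pderiv_mul, pderiv_X, Pi.single_eq_of_ne hji]
    ring
  · intro hi; exact absurd (Finset.mem_univ i) hi

lemma pderiv_Qq' {n : ℕ} (i : Fin (n+1)) : pderiv i (Qq k n) = X i + X i := by
  rw [pderiv_Qq]; ring

lemma DQ {n : ℕ} (f : MvPolynomial (Fin (n+1)) k) :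
    DD (Qq k n * f) = Qq k n * DD f
      + ((4:ℕ) : MvPolynomial (Fin (n+1)) k) * (∑ i, X i * pderiv i f)
      + ((2*(n+1) : ℕ) : MvPolynomial (Fin (n+1)) k) * f := by
  unfold DD
  have step : ∀ i : Fin (n+1), pderiv i (pderiv i (Qq k n * f))
      = Qq k n * pderiv i (pderiv i f)
        + ((4:ℕ) : MvPolynomial (Fin (n+1)) k) * (X i * pderiv i f)
        + ((2:ℕ) : MvPolynomial (Fin (n+1)) k) * f := by
    intro i
    rw [pderiv_mul, pderiv_Qq' i, map_add, pderiv_mul, pderiv_mul, pderiv_Qq' i,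
        map_add, pderiv_X_self]
    push_cast
    ring
  rw [Finset.sum_congr rfl fun i _ => step i]
  rw [Finset.sum_add_distrib, Finset.sum_add_distrib, ← Finset.mul_sum, ← Finset.mul_sum,
      Finset.sum_const, Finset.card_univ, Fintype.card_fin, nsmul_eq_mul]
  push_cast
  ring

def nu (n j c : ℕ) : ℕ := 4*(j+1)*(c+j) + 2*(j+1)*(n+1)

lemma DQ_homo {n c : ℕ} {f : MvPolynomial (Fin (n+1)) k} (hf : f.IsHomogeneous c) :
    DD (Qq k n * f) = Qq k n * DD f + C ((nu n 0 c : ℕ) : k) * f := by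
  rw [DQ, euler_eq hf, nsmulC, map_natCast (C : k →+* MvPolynomial (Fin (n+1)) k),
      map_natCast (C : k →+* MvPolynomial (Fin (n+1)) k)]
  have : nu n 0 c = 4*c + 2*(n+1) := by unfold nu; ring
  rw [this]
  push_cast
  ring

lemma DQpow_homo {n c : ℕ} (j : ℕ) {f : MvPolynomial (Fin (n+1)) k} (hf : f.IsHomogeneous c) :
    DD (Qq k n ^ (j+1) * f)
      = Qq k n ^ (j+1) * DD f + C ((nu n j c : ℕ) : k) * (Qq k n ^ j * f) := by
  induction j generalizing c f with
  | zero => simpa using DQ_homo hf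
  | succ j ih =>
    have h1 : Qq k n ^ (j+2) * f = Qq k n ^ (j+1) * (Qq k n * f) := by ring
    rw [h1, ih ((Qq_homo n).mul hf), DQ_homo hf]
    have hnu : nu n (j+1) c = nu n 0 c + nu n j (2+c) := by unfold nu; ring
    rw [hnu, Nat.cast_add, map_add]
    ring

end ColonAux

namespace ColonAux

variable {k : Type*} [Field k] {p : ℕ} [Fact p.Prime] [CharP k p]

variable (k p) in
def Master (n : ℕ) : Prop :=
  ∀ m c (h : MvPolynomial (Fin (n+1)) k), m ≤ p → h.IsHomogeneous c →
    2*(c+m) ≤ (n+1)*(p-1) → Qq k n ^ m * h ∈ Ii k p n →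
    ∃ g, h - Qq k n ^ (p-m) * g ∈ Ii k p n

lemma ker_step {n c j : ℕ} {u : MvPolynomial (Fin (n+1)) k} (hu : u.IsHomogeneous c)
    (hju : Qq k n ^ (j+1) * u ∈ Ii k p n) :
    Qq k n ^ j * (C ((nu n j c : ℕ) : k) * u + Qq k n * DD u) ∈ Ii k p n := by
  have h1 := DD_mem hju
  rw [DQpow_homo j hu] at h1
  have heq : Qq k n ^ j * (C ((nu n j c : ℕ) : k) * u + Qq k n * DD u)
      = Qq k n ^ (j+1) * DD u + C ((nu n j c : ℕ) : k) * (Qq k n ^ j * u) := by ring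
  rw [heq]
  exact h1

lemma bad_bound (hp2 : 2 < p) {n c j m : ℕ} (hjm : j + 1 ≤ m) (hmp : m ≤ p - 1)
    (hcm : 2*(c+m) ≤ (n+1)*(p-1)) (hbad : ((nu n j c : ℕ) : k) = 0) :
    1 ≤ n ∧ 2*(c+(j+1)) ≤ (n-1)*(p-1) := by
  have hpd : p ∣ nu n j c := (CharP.cast_eq_zero_iff k p _).1 hbad
  have hprime : p.Prime := Fact.out
  have hW : nu n j c = 2*(j+1)*(2*(c+j) + (n+1)) := by unfold nu; ring
  rw [hW] at hpd
  have hpW : p ∣ 2*(c+j) + (n+1) := by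
    rcases hprime.dvd_mul.1 hpd with h1 | h2
    · rcases hprime.dvd_mul.1 h1 with h2 | h3
      · have := Nat.le_of_dvd (by norm_num) h2; omega
      · have := Nat.le_of_dvd (by omega) h3; omega
    · exact h2
  obtain ⟨r, hr⟩ := hpW
  have hodd : p % 2 = 1 := Nat.odd_iff.1 (hprime.odd_of_ne_two (by omega))
  have hparity : (p * r) % 2 = r % 2 := by
    rw [Nat.mul_mod, hodd, one_mul]
    exact Nat.mod_mod_of_dvd r (dvd_refl 2)
  have e1 : (n+1)*(p-1) + (n+1) = (n+1)*p := by
    have hp' : (p - 1) + 1 = p := by omega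
    calc (n+1)*(p-1) + (n+1) = (n+1)*((p-1)+1) := by ring
      _ = (n+1)*p := by rw [hp']
  -- r ≤ n
  have hrn : r ≤ n := by
    by_contra hc
    push_neg at hc
    have h2 : p*(n+1) ≤ p*r := Nat.mul_le_mul_left p hc
    have h3 : (n+1)*p = p*(n+1) := by ring
    omega
  -- r has parity of n+1, hence r ≠ n
  have hrne : r ≠ n := by
    intro hrfl
    subst hrfl
    omega
  have hr1 : 1 ≤ r := by
    rcases Nat.eq_zero_or_pos r with h0 | h1
    · subst h0; omega
    · exact h1
  have hn1 : 1 ≤ n := by omega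
  refine ⟨hn1, ?_⟩
  have hrn1 : r ≤ n - 1 := by omega
  have hmul : p * r ≤ p * (n-1) := Nat.mul_le_mul_left p hrn1
  have e2 : (n-1)*(p-1) + (n-1) = (n-1)*p := by
    have hp' : (p - 1) + 1 = p := by omega
    calc (n-1)*(p-1) + (n-1) = (n-1)*((p-1)+1) := by ring
      _ = (n-1)*p := by rw [hp']
  have h4 : (n-1)*p = p*(n-1) := by ring
  omega

lemma chainAux (hp2 : 2 < p) {n m c : ℕ} (hmp : m ≤ p - 1)
    (hcm : 2*(c+m) ≤ (n+1)*(p-1))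
    (innerIH : ∀ c' (h' : MvPolynomial (Fin (n+1)) k), h'.IsHomogeneous c' →
      2*(c'+(m+1)) ≤ (n+1)*(p-1) → Qq k n ^ (m+1) * h' ∈ Ii k p n →
      ∃ g, h' - Qq k n ^ (p-(m+1)) * g ∈ Ii k p n)
    (hsl : ∀ m' c' (h' : MvPolynomial (Fin (n+1)) k), 1 ≤ n → m' ≤ p →
      h'.IsHomogeneous c' → 2*(c'+m') ≤ n*(p-1) → Qq k n ^ m' * h' ∈ Ii k p n →
      ∃ g, h' - Qq k n ^ (p-m') * g ∈ Ii k p n) :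
    ∀ j, j ≤ m → ∀ u : MvPolynomial (Fin (n+1)) k, u.IsHomogeneous c →
      Qq k n ^ j * u ∈ Ii k p n → ∃ g, u - Qq k n ^ (p-m) * g ∈ Ii k p n := by
  intro j
  induction j with
  | zero =>
    intro _ u hu hmem
    rw [pow_zero, one_mul] at hmem
    exact ⟨0, by rw [mul_zero, sub_zero]; exact hmem⟩
  | succ j ihj =>
    intro hjm u hu hmem
    by_cases hnu0 : ((nu n j c : ℕ) : k) = 0
    · -- bad case : use slicing
      obtain ⟨hn1, hbb⟩ := bad_bound hp2 hjm hmp hcm hnu0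
      have hbb' : 2*(c+(j+1)) ≤ n*(p-1) :=
        le_trans hbb (Nat.mul_le_mul_right _ (by omega))
      obtain ⟨g', hg'⟩ := hsl (j+1) c u hn1 (by omega) hu hbb' hmem
      refine ⟨Qq k n ^ (m-(j+1)) * g', ?_⟩
      have hexp : Qq k n ^ (p-m) * (Qq k n ^ (m-(j+1)) * g') = Qq k n ^ (p-(j+1)) * g' := by
        rw [← mul_assoc, ← pow_add]
        congr 2
        omega
      rw [hexp]
      exact hg'
    · -- good case
      by_cases hc1 : c ≤ 1
      · -- then DD u = 0 and the kernel identity kills u directly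
        have hDD : DD u = 0 := DD_zero_of_low hc1 hu
        have hker := ker_step hu hmem
        rw [hDD, mul_zero, add_zero] at hker
        have hker2 : Qq k n ^ j * u ∈ Ii k p n := by
          have h2 := Ideal.mul_mem_left _ (C (((nu n j c : ℕ) : k))⁻¹) hker
          have heq : C (((nu n j c : ℕ) : k))⁻¹ * (Qq k n ^ j * (C ((nu n j c : ℕ) : k) * u))
              = (C (((nu n j c : ℕ) : k))⁻¹ * C ((nu n j c : ℕ) : k)) * (Qq k n ^ j * u) := by
            ring
          rw [heq, ← map_mul, inv_mul_cancel₀ hnu0, map_one, one_mul] at h2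
          exact h2
        exact ihj (by omega) u hu hker2
      · push_neg at hc1
        -- u' := u + C ν⁻¹ * (Q * DD u)  is in the kernel of Q^j
        set ν : k := ((nu n j c : ℕ) : k) with hν
        have hker := ker_step hu hmem
        have hu'mem : Qq k n ^ j * (u + C ν⁻¹ * (Qq k n * DD u)) ∈ Ii k p n := by
          have h2 := Ideal.mul_mem_left _ (C ν⁻¹) hker
          have heq : C ν⁻¹ * (Qq k n ^ j * (C ν * u + Qq k n * DD u))
              = Qq k n ^ j * ((C ν⁻¹ * C ν) * u + C ν⁻¹ * (Qq k n * DD u)) := by ring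
          rw [heq, ← map_mul, inv_mul_cancel₀ hnu0, map_one, one_mul] at h2
          exact h2
        have hDDhomo : (DD u).IsHomogeneous (c-2) := DD_isHomogeneous hu
        have hu'homo : (u + C ν⁻¹ * (Qq k n * DD u)).IsHomogeneous c := by
          refine hu.add ?_
          have h3 : ((C ν⁻¹ : MvPolynomial (Fin (n+1)) k) * (Qq k n * DD u)).IsHomogeneous
              (0 + (2 + (c-2))) := (isHomogeneous_C _ _).mul ((Qq_homo n).mul hDDhomo)
          have : (0 + (2 + (c-2))) = c := by omega
          rwa [this] at h3
        obtain ⟨g1, hg1⟩ := ihj (by omega) _ hu'homo hu'mem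
        -- now handle DD u via the inner induction hypothesis (exponent m+1)
        have hQm1u : Qq k n ^ (m+1) * DD u ∈ Ii k p n := by
          have hum : Qq k n ^ (m+1) * u ∈ Ii k p n := by
            have : Qq k n ^ (m+1) * u = Qq k n ^ (m-j) * (Qq k n ^ (j+1) * u) := by
              rw [← mul_assoc, ← pow_add]
              congr 2
              omega
            rw [this]
            exact Ideal.mul_mem_left _ _ hmem
          have h1 := DD_mem hum
          rw [DQpow_homo m hu] at h1
          have hQmu : Qq k n ^ m * u ∈ Ii k p n := by
            have : Qq k n ^ m * u = Qq k n ^ (m-(j+1)) * (Qq k n ^ (j+1) * u) := by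
              rw [← mul_assoc, ← pow_add]
              congr 2
              omega
            rw [this]
            exact Ideal.mul_mem_left _ _ hmem
          have h2 : C ((nu n m c : ℕ) : k) * (Qq k n ^ m * u) ∈ Ii k p n :=
            Ideal.mul_mem_left _ _ hQmu
          have h3 := Ideal.sub_mem _ h1 h2
          simpa using h3
        obtain ⟨g2, hg2⟩ := innerIH (c-2) (DD u) hDDhomo (by omega) hQm1u
        -- assemble
        refine ⟨g1 - C ν⁻¹ * g2, ?_⟩
        have hQg2 : C ν⁻¹ * Qq k n * (DD u - Qq k n ^ (p-(m+1)) * g2) ∈ Ii k p n :=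
          Ideal.mul_mem_left _ _ hg2
        have hfinal : u - Qq k n ^ (p-m) * (g1 - C ν⁻¹ * g2)
            = (u + C ν⁻¹ * (Qq k n * DD u) - Qq k n ^ (p-m) * g1)
              - (C ν⁻¹ * Qq k n * (DD u - Qq k n ^ (p-(m+1)) * g2))
              - (C ν⁻¹ * (Qq k n * Qq k n ^ (p-(m+1)) - Qq k n ^ (p-m)) * g2) := by
          ring
        have hpow : Qq k n * Qq k n ^ (p-(m+1)) = Qq k n ^ (p-m) := by
          rw [← pow_succ']
          congr 1
          omega
        rw [hfinal, hpow, sub_self, mul_zero, zero_mul, sub_zero]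
        exact Ideal.sub_mem _ hg1 hQg2

end ColonAux

namespace ColonAux

variable {k : Type*} [Field k] {p : ℕ} [Fact p.Prime] [CharP k p]

lemma level (hp2 : 2 < p) (n : ℕ)
    (hsl : ∀ m' c' (h' : MvPolynomial (Fin (n+1)) k), 1 ≤ n → m' ≤ p →
      h'.IsHomogeneous c' → 2*(c'+m') ≤ n*(p-1) → Qq k n ^ m' * h' ∈ Ii k p n →
      ∃ g, h' - Qq k n ^ (p-m') * g ∈ Ii k p n) :
    Master k p n := by
  suffices H : ∀ i m c (h : MvPolynomial (Fin (n+1)) k), m ≤ p → p - m ≤ i →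
      h.IsHomogeneous c → 2*(c+m) ≤ (n+1)*(p-1) → Qq k n ^ m * h ∈ Ii k p n →
      ∃ g, h - Qq k n ^ (p-m) * g ∈ Ii k p n by
    intro m c h hm hh hb hmem
    exact H (p-m) m c h hm le_rfl hh hb hmem
  intro i
  induction i with
  | zero =>
    intro m c h hm hpm hh hb hmem
    have hm' : m = p := by omega
    subst hm'
    exact ⟨h, by rw [Nat.sub_self, pow_zero, one_mul, sub_self]; exact Ideal.zero_mem _⟩
  | succ i ih =>
    intro m c h hm hpm hh hb hmem
    rcases eq_or_lt_of_le hm with rfl | hmlt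
    · exact ⟨h, by rw [Nat.sub_self, pow_zero, one_mul, sub_self]; exact Ideal.zero_mem _⟩
    · exact chainAux hp2 (by omega) hb
        (fun c' h' hh' hb' hmem' => ih (m+1) c' h' (by omega) (by omega) hh' hb' hmem')
        hsl m le_rfl h hh hmem

end ColonAux

namespace ColonAux

variable {k : Type*} [Field k] {p : ℕ} [Fact p.Prime] [CharP k p]

variable (k) in
noncomputable def PP (n : ℕ) : Polynomial (MvPolynomial (Fin (n+1)) k) :=
  Polynomial.C (Qq k n) + Polynomial.X ^ 2

lemma phi_Q (n : ℕ) : (finSuccEquiv k (n+1)) (Qq k (n+1)) = PP k n := by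
  calc (finSuccEquiv k (n+1)) (Qq k (n+1))
      = ∑ i : Fin (n+2), ((finSuccEquiv k (n+1)) (X i)) ^ 2 := by
        rw [Qq, map_sum]
        exact Finset.sum_congr rfl fun i _ => map_pow _ _ _
    _ = Polynomial.X ^ 2 + ∑ i : Fin (n+1), (Polynomial.C (X i : MvPolynomial (Fin (n+1)) k)) ^ 2 := by
        rw [Fin.sum_univ_succ, finSuccEquiv_X_zero]
        refine congrArg (Polynomial.X ^ 2 + ·) ?_
        exact Finset.sum_congr rfl fun i _ => by rw [finSuccEquiv_X_succ]
    _ = PP k n := by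
        rw [PP, Qq, map_sum]
        rw [Finset.sum_congr rfl fun (i : Fin (n+1)) _ =>
          (map_pow (Polynomial.C : MvPolynomial (Fin (n+1)) k →+* _) (X i) 2).symm]
        ring

lemma Imem_coeff {n : ℕ} {y : MvPolynomial (Fin (n+2)) k} (hy : y ∈ Ii k p (n+1))
    {t : ℕ} (ht : t < p) : ((finSuccEquiv k (n+1)) y).coeff t ∈ Ii k p n := by
  obtain ⟨r, rfl⟩ := Ii_mem_iff.1 hy
  have hexp : (finSuccEquiv k (n+1)) (∑ i, r i * X i ^ p)
      = ((finSuccEquiv k (n+1)) (r 0)) * Polynomial.X ^ p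
        + ∑ i : Fin (n+1), ((finSuccEquiv k (n+1)) (r i.succ))
            * Polynomial.C ((X i : MvPolynomial (Fin (n+1)) k) ^ p) := by
    rw [map_sum, Fin.sum_univ_succ]
    congr 1
    · rw [map_mul, map_pow, finSuccEquiv_X_zero]
    · exact Finset.sum_congr rfl fun i _ => by
        rw [map_mul, map_pow, finSuccEquiv_X_succ, ← map_pow]
  rw [hexp, Polynomial.coeff_add, Polynomial.finset_sum_coeff]
  apply Ideal.add_mem
  · rw [Polynomial.coeff_mul_X_pow', if_neg (by omega)]
    exact Ideal.zero_mem _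
  · refine Ideal.sum_mem _ fun i _ => ?_
    rw [Polynomial.coeff_mul_C]
    exact Ideal.mul_mem_left _ _ (Xp_mem n i)

lemma mem_of_coeff {n : ℕ} (y : MvPolynomial (Fin (n+2)) k)
    (hy : ∀ t, t < p → ((finSuccEquiv k (n+1)) y).coeff t ∈ Ii k p n) :
    y ∈ Ii k p (n+1) := by
  classical
  set φr : MvPolynomial (Fin (n+2)) k →+* Polynomial (MvPolynomial (Fin (n+1)) k) :=
    (finSuccEquiv k (n+1)).toAlgHom.toRingHom with hφr
  set F : Polynomial (MvPolynomial (Fin (n+1)) k) := (finSuccEquiv k (n+1)) y with hF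
  set R : Polynomial (MvPolynomial (Fin (n+1)) k) :=
    ∑ t ∈ Finset.range p, Polynomial.C (F.coeff t) * Polynomial.X ^ t with hR
  have hRcoeff : ∀ u, u < p → R.coeff u = F.coeff u := by
    intro u hu
    rw [hR, Polynomial.finset_sum_coeff]
    have hterm : ∀ t ∈ Finset.range p,
        (Polynomial.C (F.coeff t) * Polynomial.X ^ t).coeff u
          = if u = t then F.coeff t else 0 := by
      intro t _
      rw [Polynomial.coeff_C_mul, Polynomial.coeff_X_pow, mul_ite, mul_one, mul_zero]
    rw [Finset.sum_congr rfl hterm, Finset.sum_ite_eq (Finset.range p) u (fun t => F.coeff t),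
        if_pos (Finset.mem_range.2 hu)]
  have hdvd : Polynomial.X ^ p ∣ F - R := by
    rw [Polynomial.X_pow_dvd_iff]
    intro u hu
    rw [Polynomial.coeff_sub, hRcoeff u hu, sub_self]
  obtain ⟨q, hq⟩ := hdvd
  have hgen : ∀ i : Fin (n+1), φr (X i.succ ^ p) = Polynomial.C ((X i : MvPolynomial (Fin (n+1)) k) ^ p) := by
    intro i
    show (finSuccEquiv k (n+1)) (X i.succ ^ p) = _
    rw [map_pow, finSuccEquiv_X_succ, ← map_pow]
  have hR_mem : R ∈ Ideal.map φr (Ii k p (n+1)) := by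
    refine Ideal.sum_mem _ fun t htp => ?_
    have hFt : F.coeff t ∈ Ii k p n := hy t (Finset.mem_range.1 htp)
    obtain ⟨r, hr⟩ := Ii_mem_iff.1 hFt
    have hCF : Polynomial.C (F.coeff t)
        = ∑ i : Fin (n+1), Polynomial.C (r i) * φr (X i.succ ^ p) := by
      rw [← hr, map_sum]
      exact Finset.sum_congr rfl fun i _ => by rw [map_mul, hgen i]
    rw [hCF, Finset.sum_mul]
    refine Ideal.sum_mem _ fun i _ => ?_
    exact Ideal.mul_mem_right _ _ (Ideal.mul_mem_left _ _
      (Ideal.mem_map_of_mem φr (Xp_mem (n+1) i.succ)))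
  have hXp_mem : Polynomial.X ^ p * q ∈ Ideal.map φr (Ii k p (n+1)) := by
    have h0 : φr (X (0 : Fin (n+2)) ^ p) = Polynomial.X ^ p := by
      show (finSuccEquiv k (n+1)) (X 0 ^ p) = _
      rw [map_pow, finSuccEquiv_X_zero]
    rw [← h0]
    exact Ideal.mul_mem_right _ _ (Ideal.mem_map_of_mem φr (Xp_mem (n+1) 0))
  have hFmem : F ∈ Ideal.map φr (Ii k p (n+1)) := by
    have : F = R + (F - R) := by ring
    rw [this, hq]
    exact Ideal.add_mem _ hR_mem hXp_mem
  set ψr : Polynomial (MvPolynomial (Fin (n+1)) k) →+* MvPolynomial (Fin (n+2)) k :=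
    (finSuccEquiv k (n+1)).symm.toAlgHom.toRingHom with hψr
  have h3 := Ideal.mem_map_of_mem ψr hFmem
  rw [Ideal.map_map] at h3
  have hcomp : ψr.comp φr = RingHom.id _ := by
    refine RingHom.ext fun x => ?_
    show (finSuccEquiv k (n+1)).symm ((finSuccEquiv k (n+1)) x) = x
    simp
  rw [hcomp, Ideal.map_id] at h3
  have hψF : ψr F = y := by
    show (finSuccEquiv k (n+1)).symm ((finSuccEquiv k (n+1)) y) = y
    simp
  rwa [hψF] at h3

end ColonAux

namespace ColonAux

variable {k : Type*} [Field k] {p : ℕ} [Fact p.Prime] [CharP k p]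

lemma coeff_PP_pow_mul {n : ℕ} (r t : ℕ) (Z : Polynomial (MvPolynomial (Fin (n+1)) k)) :
    (PP k n ^ r * Z).coeff t
      = ∑ c ∈ Finset.range (r+1),
          if 2*c ≤ t then (r.choose c) • (Qq k n ^ (r-c) * Z.coeff (t - 2*c)) else 0 := by
  have hexp : PP k n ^ r = ∑ c ∈ Finset.range (r+1),
      (Polynomial.X ^ 2) ^ c * (Polynomial.C (Qq k n)) ^ (r-c)
        * ((r.choose c : ℕ) : Polynomial (MvPolynomial (Fin (n+1)) k)) := by
    rw [PP, add_comm (Polynomial.C (Qq k n)), add_pow]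
  rw [hexp, Finset.sum_mul, Polynomial.finset_sum_coeff]
  apply Finset.sum_congr rfl
  intro c _
  have h1 : (Polynomial.X ^ 2) ^ c * (Polynomial.C (Qq k n)) ^ (r-c)
        * ((r.choose c : ℕ) : Polynomial (MvPolynomial (Fin (n+1)) k)) * Z
      = (r.choose c) • (Polynomial.C (Qq k n ^ (r-c)) * Z * Polynomial.X ^ (2*c)) := by
    rw [map_pow (Polynomial.C : MvPolynomial (Fin (n+1)) k →+* _) (Qq k n) (r-c),
        nsmul_eq_mul, pow_mul]
    ring
  rw [h1, Polynomial.coeff_smul, Polynomial.coeff_mul_X_pow']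
  by_cases h2 : 2*c ≤ t
  · rw [if_pos h2, if_pos h2, Polynomial.coeff_C_mul]
  · rw [if_neg h2, if_neg h2, smul_zero]

lemma degree_cons {N : ℕ} (t : ℕ) (m0 : Fin N →₀ ℕ) :
    (Finsupp.cons t m0).degree = t + m0.degree := by
  have h1 : ∀ (M : ℕ) (l : Fin M →₀ ℕ), l.degree = l.sum fun _ e => e := by
    intro M l
    rfl
  rw [h1, h1, Finsupp.sum_cons]

lemma phi_coeff_homo {n dd : ℕ} {h : MvPolynomial (Fin (n+2)) k} (hh : h.IsHomogeneous dd)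
    (t : ℕ) : (((finSuccEquiv k (n+1)) h).coeff t).IsHomogeneous (dd - t) := by
  rw [isHomo_iff]
  intro m0 hm0
  rw [finSuccEquiv_coeff_coeff] at hm0
  have := isHomo_iff.1 hh _ hm0
  rw [degree_cons] at this
  omega

lemma phi_coeff_zero {n dd : ℕ} {h : MvPolynomial (Fin (n+2)) k} (hh : h.IsHomogeneous dd)
    {t : ℕ} (ht : dd < t) : ((finSuccEquiv k (n+1)) h).coeff t = 0 := by
  apply MvPolynomial.ext
  intro m0
  rw [coeff_zero]
  by_contra hne
  rw [finSuccEquiv_coeff_coeff] at hne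
  have := isHomo_iff.1 hh _ hne
  rw [degree_cons] at this
  omega

lemma nsmul_homo {n c b : ℕ} {f : MvPolynomial (Fin (n+1)) k} (hf : f.IsHomogeneous c) :
    (b • f).IsHomogeneous c := by
  rw [nsmulC]
  simpa using (isHomogeneous_C (Fin (n+1)) ((b : ℕ) : k)).mul hf

end ColonAux

namespace ColonAux

variable {k : Type*} [Field k] {p : ℕ} [Fact p.Prime] [CharP k p]

lemma slicing (n : ℕ) (hM : Master k p n) :
    ∀ m d (h : MvPolynomial (Fin (n+2)) k), m ≤ p → h.IsHomogeneous d →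
      2*(d+m) ≤ (n+1)*(p-1) → Qq k (n+1) ^ m * h ∈ Ii k p (n+1) →
      ∃ g, h - Qq k (n+1) ^ (p-m) * g ∈ Ii k p (n+1) := by
  intro m d h hm hh hb hmem
  by_cases hmp' : m = p
  · subst hmp'
    exact ⟨h, by rw [Nat.sub_self, pow_zero, one_mul, sub_self]; exact Ideal.zero_mem _⟩
  have hmlt : m < p := lt_of_le_of_ne hm hmp'
  have hcoeffmem : ∀ t, t < p →
      ((PP k n) ^ m * (finSuccEquiv k (n+1)) h).coeff t ∈ Ii k p n := by
    intro t ht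
    have heq : (PP k n) ^ m * (finSuccEquiv k (n+1)) h
        = (finSuccEquiv k (n+1)) (Qq k (n+1) ^ m * h) := by
      rw [map_mul, map_pow, phi_Q]
    rw [heq]
    exact Imem_coeff hmem ht
  have hPp : (PP k n) ^ p = Polynomial.C (Qq k n ^ p) + Polynomial.X ^ (2*p) := by
    rw [PP, add_pow_char, ← map_pow, ← pow_mul]
  have key : ∀ T, T ≤ p → ∃ G : Polynomial (MvPolynomial (Fin (n+1)) k),
      (∀ u, (G.coeff u).IsHomogeneous (d - u - 2*(p-m))) ∧
      (∀ u, d < u + 2*(p-m) → G.coeff u = 0) ∧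
      (∀ u, T ≤ u → G.coeff u = 0) ∧
      (∀ u, u < T →
        ((finSuccEquiv k (n+1)) h - (PP k n) ^ (p-m) * G).coeff u ∈ Ii k p n) := by
    intro T
    induction T with
    | zero =>
      exact fun _ => ⟨0, fun u => by simpa using isHomogeneous_zero _ _ _,
        fun u _ => by simp, fun u _ => by simp,
        fun u hu => absurd hu (Nat.not_lt_zero u)⟩
    | succ T ihT =>
      intro hT1
      obtain ⟨G, hG1, hG2, hG3, hG4⟩ := ihT (by omega)
      set F : Polynomial (MvPolynomial (Fin (n+1)) k) := (finSuccEquiv k (n+1)) h with hF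
      set E : Polynomial (MvPolynomial (Fin (n+1)) k) := F - (PP k n) ^ (p-m) * G with hE
      have hPmE : ∀ t, t < p → ((PP k n) ^ m * E).coeff t ∈ Ii k p n := by
        intro t ht
        have hpowm : (PP k n) ^ m * (PP k n) ^ (p-m) = (PP k n) ^ p := by
          rw [← pow_add]; congr 1; omega
        have hsplit : (PP k n) ^ m * E
            = (PP k n) ^ m * F
              - (Polynomial.C (Qq k n ^ p) * G + Polynomial.X ^ (2*p) * G) := by
          calc (PP k n) ^ m * E
              = (PP k n) ^ m * F - ((PP k n) ^ m * (PP k n) ^ (p-m)) * G := by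
                rw [hE]; ring
            _ = (PP k n) ^ m * F
                - (Polynomial.C (Qq k n ^ p) * G + Polynomial.X ^ (2*p) * G) := by
                rw [hpowm, hPp]; ring
        rw [hsplit, Polynomial.coeff_sub, Polynomial.coeff_add]
        refine Ideal.sub_mem _ (hcoeffmem t ht) (Ideal.add_mem _ ?_ ?_)
        · rw [Polynomial.coeff_C_mul]
          exact Ideal.mul_mem_right _ _ (Qp_mem n)
        · rw [mul_comm (Polynomial.X ^ (2*p)) G, Polynomial.coeff_mul_X_pow',
            if_neg (by omega)]
          exact Ideal.zero_mem _
      have hQmET : Qq k n ^ m * E.coeff T ∈ Ii k p n := by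
        have h1 := hPmE T (by omega)
        rw [coeff_PP_pow_mul, Finset.sum_range_succ'] at h1
        have hc0 : (if 2*0 ≤ T then (m.choose 0) • (Qq k n ^ (m-0) * E.coeff (T - 2*0)) else 0)
            = Qq k n ^ m * E.coeff T := by
          rw [if_pos (by omega)]
          simp
        rw [hc0] at h1
        have hrest : ∑ c ∈ Finset.range m,
            (if 2*(c+1) ≤ T then
              ((m.choose (c+1)) • (Qq k n ^ (m-(c+1)) * E.coeff (T - 2*(c+1)))) else 0)
            ∈ Ii k p n := by
          refine Ideal.sum_mem _ fun c _ => ?_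
          by_cases h2 : 2*(c+1) ≤ T
          · rw [if_pos h2, nsmulC]
            exact Ideal.mul_mem_left _ _ (Ideal.mul_mem_left _ _ (hG4 _ (by omega)))
          · rw [if_neg h2]; exact Ideal.zero_mem _
        have h3 := Ideal.sub_mem _ h1 hrest
        simpa using h3
      have hEhomo : ∀ t, (E.coeff t).IsHomogeneous (d - t) := by
        intro t
        rw [hE, Polynomial.coeff_sub]
        apply MvPolynomial.IsHomogeneous.sub
        · exact phi_coeff_homo hh t
        · rw [coeff_PP_pow_mul]
          apply MvPolynomial.IsHomogeneous.sum
          intro c hc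
          have hcle : c ≤ p - m := by have := Finset.mem_range.1 hc; omega
          by_cases h2 : 2*c ≤ t
          · rw [if_pos h2]
            apply nsmul_homo
            by_cases h3 : d < (t - 2*c) + 2*(p-m)
            · rw [hG2 _ h3, mul_zero]; exact isHomogeneous_zero _ _ _
            · have h4 := (Qq_pow_homo n (p-m-c)).mul (hG1 (t - 2*c))
              have h5 : 2*(p-m-c) + (d - (t - 2*c) - 2*(p-m)) = d - t := by omega
              rwa [h5] at h4
          · rw [if_neg h2]; exact isHomogeneous_zero _ _ _
      obtain ⟨γ0, hγ0⟩ := hM m (d - T) (E.coeff T) hm (hEhomo T) (by omega) hQmET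
      obtain ⟨γ, hγmem, hγhomo, hγzero⟩ :
          ∃ γ : MvPolynomial (Fin (n+1)) k,
            (E.coeff T - Qq k n ^ (p-m) * γ ∈ Ii k p n)
            ∧ γ.IsHomogeneous (d - T - 2*(p-m)) ∧ (d < T + 2*(p-m) → γ = 0) := by
        by_cases hcase : T + 2*(p-m) ≤ d
        · refine ⟨homogeneousComponent (d - T - 2*(p-m)) γ0, ?_,
            homogeneousComponent_isHomogeneous _ _, fun hlt => absurd hcase (by omega)⟩
          have h6 := Ii_hc hγ0 (2*(p-m) + (d - T - 2*(p-m)))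
          rw [map_sub, hc_mul_left (Qq_pow_homo n (p-m))] at h6
          have h8 : 2*(p-m) + (d - T - 2*(p-m)) = d - T := by omega
          rw [h8, hc_self (hEhomo T)] at h6
          exact h6
        · push_neg at hcase
          refine ⟨0, ?_, isHomogeneous_zero _ _ _, fun _ => rfl⟩
          rw [mul_zero, sub_zero]
          have h6 := Ii_hc hγ0 (d - T)
          rw [map_sub, hc_self (hEhomo T),
            hc_mul_left_zero (Qq_pow_homo n (p-m)) (by omega)] at h6
          rwa [sub_zero] at h6
      refine ⟨G + Polynomial.C γ * Polynomial.X ^ T, ?_, ?_, ?_, ?_⟩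
      · intro u
        rw [Polynomial.coeff_add, Polynomial.coeff_C_mul, Polynomial.coeff_X_pow,
          mul_ite, mul_one, mul_zero]
        by_cases huT : u = T
        · subst huT
          rw [hG3 u le_rfl, if_pos rfl, zero_add]
          exact hγhomo
        · rw [if_neg huT, add_zero]
          exact hG1 u
      · intro u hu
        rw [Polynomial.coeff_add, Polynomial.coeff_C_mul, Polynomial.coeff_X_pow,
          mul_ite, mul_one, mul_zero, hG2 u hu]
        by_cases huT : u = T
        · subst huT
          rw [if_pos rfl, hγzero (by omega), zero_add]
        · rw [if_neg huT, add_zero]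
      · intro u hu
        rw [Polynomial.coeff_add, Polynomial.coeff_C_mul, Polynomial.coeff_X_pow,
          mul_ite, mul_one, mul_zero, hG3 u (by omega), if_neg (by omega), add_zero]
      · intro u hu
        have hE'eq : F - (PP k n) ^ (p-m) * (G + Polynomial.C γ * Polynomial.X ^ T)
            = E - (PP k n) ^ (p-m) * (Polynomial.C γ * Polynomial.X ^ T) := by
          rw [hE]; ring
        rw [hE'eq, Polynomial.coeff_sub]
        have hcoeffP : ((PP k n) ^ (p-m) * (Polynomial.C γ * Polynomial.X ^ T)).coeff u
            = if u = T then Qq k n ^ (p-m) * γ else 0 := by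
          rw [coeff_PP_pow_mul]
          by_cases huT : u = T
          · subst huT
            rw [Finset.sum_eq_single 0]
            · rw [if_pos (by omega), if_pos rfl]
              simp
            · intro c hc hc0
              by_cases h2 : 2*c ≤ u
              · rw [if_pos h2]
                have hz : (Polynomial.C γ * Polynomial.X ^ u).coeff (u - 2*c) = 0 := by
                  rw [Polynomial.coeff_C_mul, Polynomial.coeff_X_pow, if_neg (by omega),
                    mul_zero]
                rw [hz, mul_zero, smul_zero]
              · rw [if_neg h2]
            · intro h0; exact absurd (Finset.mem_range.2 (by omega)) h0
          · rw [if_neg huT]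
            apply Finset.sum_eq_zero
            intro c hc
            by_cases h2 : 2*c ≤ u
            · rw [if_pos h2]
              have hz : (Polynomial.C γ * Polynomial.X ^ T).coeff (u - 2*c) = 0 := by
                rw [Polynomial.coeff_C_mul, Polynomial.coeff_X_pow, if_neg (by omega),
                  mul_zero]
              rw [hz, mul_zero, smul_zero]
            · rw [if_neg h2]
        rw [hcoeffP]
        by_cases huT : u = T
        · subst huT
          rw [if_pos rfl]
          exact hγmem
        · rw [if_neg huT, sub_zero]
          exact hG4 u (by omega)
  obtain ⟨G, _, _, _, hGmem⟩ := key p le_rfl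
  refine ⟨(finSuccEquiv k (n+1)).symm G, ?_⟩
  apply mem_of_coeff
  intro t ht
  have heq : (finSuccEquiv k (n+1)) (h - Qq k (n+1) ^ (p-m) * (finSuccEquiv k (n+1)).symm G)
      = (finSuccEquiv k (n+1)) h - (PP k n) ^ (p-m) * G := by
    rw [map_sub, map_mul, map_pow, phi_Q, AlgEquiv.apply_symm_apply]
  rw [heq]
  exact hGmem t ht

end ColonAux

namespace ColonAux

variable {k : Type*} [Field k] {p : ℕ} [Fact p.Prime] [CharP k p]

lemma master_all (hp2 : 2 < p) : ∀ n, Master k p n := by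
  intro n
  induction n with
  | zero =>
    apply level hp2 0
    intro m' c' h' h1n _ _ _ _
    exact absurd h1n (by omega)
  | succ n ihn =>
    apply level hp2 (n+1)
    intro m' c' h' _ hm' hh' hb' hmem'
    exact slicing n ihn m' c' h' hm' hh' hb' hmem'

end ColonAux

/-- Proposition 2.2 of the paper: over a field `k` of characteristic `p > 2`, for
`0 ≤ e < p` and any degree `d ≤ (N+1)(p−1)/2 − e`, the degree-`d` graded piece of the
colon ideal `((x_0^p,…,x_N^p) : (∑ x_i^2)^e)` equals the degree-`d` piece of the ideal
`(x_0^p,…,x_N^p, (∑ x_i^2)^{p−e})`: for homogeneous `h` of degree `d`,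
`(∑ x_i^2)^e · h ∈ (x_0^p,…,x_N^p)` iff `h ∈ (x_0^p,…,x_N^p, (∑ x_i^2)^{p−e})`. -/
theorem degree_piece_of_colon_ideal (k : Type*) [Field k] (p : ℕ) [Fact p.Prime]
    [CharP k p] (hp : 2 < p) (N e d : ℕ) (he : e < p)
    (hd : 2 * (d + e) ≤ (N + 1) * (p - 1))
    (h : MvPolynomial (Fin (N + 1)) k) (hh : h.IsHomogeneous d) :
    (∑ i, X i ^ 2) ^ e * h ∈
        Ideal.span (Set.range fun i : Fin (N + 1) => (X i : MvPolynomial (Fin (N + 1)) k) ^ p) ↔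
      h ∈ Ideal.span
        ((Set.range fun i : Fin (N + 1) => (X i : MvPolynomial (Fin (N + 1)) k) ^ p) ∪
          {(∑ i, X i ^ 2) ^ (p - e)}) := by
  constructor
  · intro hQe
    have hmem : ColonAux.Qq k N ^ e * h ∈ ColonAux.Ii k p N := hQe
    obtain ⟨g, hg⟩ := ColonAux.master_all hp N e d h (le_of_lt he) hh hd hmem
    rw [Ideal.span_union]
    apply Submodule.mem_sup.2
    refine ⟨h - ColonAux.Qq k N ^ (p-e) * g, hg,
      ColonAux.Qq k N ^ (p-e) * g, ?_, by ring⟩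
    exact Ideal.mem_span_singleton'.2 ⟨g, by rw [mul_comm]; rfl⟩
  · intro hmem
    rw [Ideal.span_union] at hmem
    obtain ⟨a, ha, b, hb2, rfl⟩ := Submodule.mem_sup.1 hmem
    obtain ⟨r, hr⟩ := Ideal.mem_span_singleton'.1 hb2
    rw [mul_add]
    apply Ideal.add_mem
    · exact Ideal.mul_mem_left _ _ ha
    · rw [← hr]
      have hcalc : (∑ i, X i ^ 2) ^ e
            * (r * (∑ i, X i ^ 2) ^ (p-e) : MvPolynomial (Fin (N + 1)) k)
          = r * ((∑ i, X i ^ 2) ^ p) := by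
        have h1 : (∑ i, X i ^ 2) ^ e * (r * (∑ i, X i ^ 2) ^ (p-e) : MvPolynomial (Fin (N + 1)) k)
            = r * ((∑ i, X i ^ 2) ^ e * (∑ i, X i ^ 2) ^ (p-e)) := by ring
        rw [h1, ← pow_add]
        congr 2
        omega
      rw [hcalc]
      exact Ideal.mul_mem_left _ _ (ColonAux.Qp_mem N)
end

section
/- With the notation above (q ≥ 1 odd, N = n+1, dim A_i = α_{i,N} + α_{i−1,N} where ((1−t^q)/(1−t))^N = ∑ α_{i,N} t^i), set d_{N,s} = n(q−1)/2 and γ_N(i) = (1/2^N) ∑_{j∈ℤ} (−1)^j dim A_{d_{N,s}+i+jq}. Then the γ_N satisfy the recursion 2·γ_N(i) = ∑_{|j| ≤ (q−1)/2} γ_{N−1}(i+j) (where γ on the right is taken for the ring in one fewer variable). -/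
open Finset PowerSeries

/-- `dim A_i` for `A = k[x_0,…,x_N]/(x_0^2+⋯+x_N^2, x_1^q,…,x_N^q)`, read off from the
Hilbert series `h_A(t) = (1+t)·((1−t^q)/(1−t))^N`, extended by `0` to negative degrees. -/
noncomputable def dimA (q N : ℕ) (i : ℤ) : ℚ :=
  if 0 ≤ i then
    (PowerSeries.coeff (R := ℚ) i.toNat)
      ((1 + PowerSeries.X) * (∑ l ∈ Finset.range q, (PowerSeries.X : PowerSeries ℚ) ^ l) ^ N)
  else 0

/-- `γ_N(i) = (1/2^N) ∑_{j∈ℤ} (−1)^j dim A_{d_{N,s}+i+jq}` where `d_{N,s} = (N−1)(q−1)/2`. -/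
noncomputable def gam (q N : ℕ) (i : ℤ) : ℚ :=
  (1 / 2 ^ N) * ∑ᶠ j : ℤ, (-1 : ℚ) ^ j * dimA q N (((N : ℤ) - 1) * ((q : ℤ) - 1) / 2 + i + j * q)

lemma dimA_eq_zero_of_lt (q M : ℕ) (hq : 1 ≤ q) (m : ℤ) (h : (M:ℤ)*((q:ℤ)-1)+1 < m) :
    dimA q M m = 0 := by
  have hk : (M:ℤ)*((q:ℤ)-1) = (M*(q-1) : ℕ) := by
    push_cast [Nat.cast_sub hq]; ring
  rw [hk] at h
  have hm0 : 0 ≤ m := by omega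
  have hmn : M*(q-1)+1 < m.toNat := by omega
  rw [dimA, if_pos hm0]
  set P : Polynomial ℚ := (1 + Polynomial.X) * (∑ l ∈ Finset.range q, Polynomial.X ^ l) ^ M
    with hP
  have hcoe : ((1 + PowerSeries.X) *
      (∑ l ∈ Finset.range q, (PowerSeries.X : PowerSeries ℚ) ^ l) ^ M) = (P : PowerSeries ℚ) := by
    have hsum : ((∑ l ∈ Finset.range q, Polynomial.X ^ l : Polynomial ℚ) : PowerSeries ℚ)
        = ∑ l ∈ Finset.range q, (PowerSeries.X : PowerSeries ℚ) ^ l := by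
      rw [← Polynomial.coeToPowerSeries.ringHom_apply, map_sum]
      simp [Polynomial.coeToPowerSeries.ringHom_apply, Polynomial.coe_pow, Polynomial.coe_X]
    rw [hP, Polynomial.coe_mul, Polynomial.coe_pow, Polynomial.coe_add, Polynomial.coe_one,
      Polynomial.coe_X, hsum]
  rw [hcoe, Polynomial.coeff_coe]
  apply Polynomial.coeff_eq_zero_of_natDegree_lt
  have h1 : (1 + Polynomial.X : Polynomial ℚ).natDegree ≤ 1 := by
    refine (Polynomial.natDegree_add_le _ _).trans ?_
    simp
  have h2 : ((∑ l ∈ Finset.range q, Polynomial.X ^ l : Polynomial ℚ)).natDegree ≤ q - 1 :=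
    Polynomial.natDegree_sum_le_of_forall_le _ _ fun l hl => by
      simpa [Polynomial.natDegree_X_pow] using Nat.le_sub_one_of_lt (Finset.mem_range.mp hl)
  have h3 : P.natDegree ≤ 1 + M*(q-1) := by
    refine (Polynomial.natDegree_mul_le).trans ?_
    gcongr
    exact (Polynomial.natDegree_pow_le).trans (by exact Nat.mul_le_mul_left _ h2)
  omega

lemma dimA_rec (q N : ℕ) (hN : 1 ≤ N) (m : ℤ) :
    dimA q N m = ∑ l ∈ Finset.range q, dimA q (N-1) (m - l) := by
  rcases lt_or_ge m 0 with hm | hm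
  · rw [dimA, if_neg (by omega)]
    refine (Finset.sum_eq_zero fun l _ => ?_).symm
    rw [dimA, if_neg (by omega)]
  · obtain ⟨n, rfl⟩ : ∃ n : ℕ, m = n := ⟨m.toNat, (Int.toNat_of_nonneg hm).symm⟩
    rw [dimA, if_pos hm]
    have hsplit : (∑ l ∈ Finset.range q, (PowerSeries.X : PowerSeries ℚ) ^ l) ^ N
        = (∑ l ∈ Finset.range q, (PowerSeries.X : PowerSeries ℚ) ^ l) ^ (N-1) *
          (∑ l ∈ Finset.range q, (PowerSeries.X : PowerSeries ℚ) ^ l) := by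
      rw [← pow_succ]; congr 1; omega
    rw [hsplit, ← mul_assoc, Finset.mul_sum, map_sum]
    refine Finset.sum_congr rfl fun l hl => ?_
    rw [PowerSeries.coeff_mul_X_pow', dimA]
    rcases le_or_gt l n with h1 | h1
    · rw [if_pos (by omega), if_pos (by omega : (0:ℤ) ≤ (n:ℤ) - l)]
      congr 2
      omega
    · rw [if_neg (by omega), if_neg (by omega : ¬ (0:ℤ) ≤ (n:ℤ) - l)]

lemma finsum_gam_eq (q M : ℕ) (hq : 1 ≤ q) (c : ℤ) (s : Finset ℤ)
    (hs : ∀ j : ℤ, -|c| ≤ j → j ≤ (M:ℤ)*q + 1 + |c| → j ∈ s) :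
    (∑ᶠ j : ℤ, (-1:ℚ)^j * dimA q M (c + j*q)) = ∑ j ∈ s, (-1:ℚ)^j * dimA q M (c + j*q) := by
  apply finsum_eq_finset_sum_of_support_subset
  intro j hj
  have h1 : dimA q M (c + j*q) ≠ 0 := fun h0 => hj (by simp [h0])
  have h2 : 0 ≤ c + j*q := by
    by_contra hc
    exact h1 (by rw [dimA, if_neg hc])
  have h3 : c + j*q ≤ (M:ℤ)*((q:ℤ)-1)+1 := by
    by_contra hc
    exact h1 (dimA_eq_zero_of_lt q M hq _ (by omega))
  have hq' : (1:ℤ) ≤ (q:ℤ) := by exact_mod_cast hq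
  have hM : (0:ℤ) ≤ (M:ℤ) := Int.natCast_nonneg M
  simp only [Finset.mem_coe]
  apply hs
  · rcases le_or_gt 0 j with h4 | h4
    · linarith [abs_nonneg c]
    · nlinarith [le_abs_self c]
  · rcases le_or_gt j 0 with h4 | h4
    · nlinarith [abs_nonneg c, neg_abs_le c]
    · nlinarith [neg_abs_le c]


/-- The recursion of Lemma 2.8 of the paper:
`2·γ_N(i) = ∑_{|j| ≤ (q−1)/2} γ_{N−1}(i+j)` for odd `q`. -/
theorem gam_recursion (q : ℕ) (hq : Odd q) (hq3 : 3 ≤ q) (N : ℕ) (hN : 2 ≤ N) (i : ℤ) :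
    2 * gam q N i =
      ∑ j ∈ Finset.Icc (-(((q : ℤ) - 1) / 2)) (((q : ℤ) - 1) / 2), gam q (N - 1) (i + j) := by
  obtain ⟨k, hk⟩ := hq
  have hq1 : 1 ≤ q := by omega
  simp only [gam]
  set h : ℤ := ((q:ℤ)-1)/2 with hh
  have hqh : (q:ℤ) = 2*h + 1 := by subst hk; rw [hh]; push_cast; omega
  have hh1 : 1 ≤ h := by omega
  set d : ℤ := ((N:ℤ)-1)*((q:ℤ)-1)/2 with hdd
  set d' : ℤ := (((N-1:ℕ):ℤ)-1)*((q:ℤ)-1)/2 with hdd'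
  have hN1 : ((N-1:ℕ):ℤ) = (N:ℤ)-1 := by push_cast [Nat.cast_sub (by omega : 1 ≤ N)]; ring
  have hd : d = ((N:ℤ)-1)*h := by
    rw [hdd, show ((N:ℤ)-1)*((q:ℤ)-1) = 2*(((N:ℤ)-1)*h) by rw [hqh]; ring,
      Int.mul_ediv_cancel_left _ two_ne_zero]
  have hd' : d' = ((N:ℤ)-2)*h := by
    rw [hdd', hN1, show ((N:ℤ)-1-1)*((q:ℤ)-1) = 2*(((N:ℤ)-2)*h) by rw [hqh]; ring,
      Int.mul_ediv_cancel_left _ two_ne_zero]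
  have hdsum : d = d' + h := by rw [hd, hd']; ring
  have hNN : (2:ℤ) ≤ (N:ℤ) := by exact_mod_cast hN
  have hd'0 : 0 ≤ d' := by rw [hd']; exact mul_nonneg (by omega) (by omega)
  have hdd0 : d' ≤ d := by rw [hd, hd']; nlinarith
  have habsd' : |d'| ≤ |d| := by
    rw [abs_of_nonneg hd'0, abs_of_nonneg (hd'0.trans hdd0)]; exact hdd0
  have hq0 : (0:ℤ) ≤ (q:ℤ) := Int.natCast_nonneg q
  have hNq : (0:ℤ) ≤ (N:ℤ)*q := mul_nonneg (by omega) hq0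
  set C : ℤ := |d| + |i| + (N:ℤ)*q + 1 + 2*q with hC
  set s : Finset ℤ := Finset.Icc (-C) C with hs
  -- rewrite LHS finsum
  have hs1 : ∀ j : ℤ, -|d + i| ≤ j → j ≤ (N:ℤ)*q + 1 + |d + i| → j ∈ s := by
    intro j hj1 hj2
    rw [hs, Finset.mem_Icc]
    have := abs_add_le d i
    constructor <;> [linarith [abs_nonneg d, abs_nonneg i]; linarith]
  rw [finsum_gam_eq q N hq1 (d + i) s hs1]
  -- rewrite RHS finsums
  have hs2 : ∀ l' ∈ Finset.Icc (-h) h, ∀ j : ℤ, -|d' + (i + l')| ≤ j →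
      j ≤ ((N-1:ℕ):ℤ)*q + 1 + |d' + (i + l')| → j ∈ s := by
    intro l' hl' j hj1 hj2
    rw [Finset.mem_Icc] at hl'
    rw [hs, Finset.mem_Icc]
    have h5 := abs_add_le d' (i + l')
    have h6 := abs_add_le i l'
    have h7 : |l'| ≤ h := abs_le.mpr hl'
    rw [hN1] at hj2
    have h8 : ((N:ℤ)-1)*q ≤ (N:ℤ)*q := by nlinarith
    constructor <;> [linarith [abs_nonneg d, abs_nonneg i]; linarith]
  have hRHS : ∀ l' ∈ Finset.Icc (-h) h,
      (1 / 2 ^ (N-1) : ℚ) * ∑ᶠ j : ℤ, (-1:ℚ)^j * dimA q (N-1) (d' + (i + l') + j*q)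
      = (1 / 2 ^ (N-1)) * ∑ j ∈ s, (-1:ℚ)^j * dimA q (N-1) (d' + (i + l') + j*q) := by
    intro l' hl'
    rw [finsum_gam_eq q (N-1) hq1 (d' + (i + l')) s (hs2 l' hl')]
  rw [Finset.sum_congr rfl hRHS]
  -- expand dimA recurrence and reindex
  have hrec : ∀ j ∈ s, (-1:ℚ)^j * dimA q N (d + i + j*q)
      = ∑ l' ∈ Finset.Icc (-h) h, (-1:ℚ)^j * dimA q (N-1) (d' + (i + l') + j*q) := by
    intro j _
    rw [dimA_rec q N (by omega), Finset.mul_sum]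
    refine Finset.sum_nbij' (fun l => h - (l:ℤ)) (fun l' => (h - l').toNat) ?_ ?_ ?_ ?_ ?_
    · intro l hl
      rw [Finset.mem_range] at hl
      rw [Finset.mem_Icc]
      omega
    · intro l' hl'
      rw [Finset.mem_Icc] at hl'
      rw [Finset.mem_range]
      omega
    · intro l hl; rw [Finset.mem_range] at hl; omega
    · intro l' hl'; rw [Finset.mem_Icc] at hl'; omega
    · intro l hl
      have harg : d + i + j*(q:ℤ) - (l:ℤ) = d' + (i + (h - (l:ℤ))) + j*(q:ℤ) := by linarith
      rw [harg]
  rw [Finset.sum_congr rfl hrec, Finset.sum_comm, ← Finset.mul_sum, Finset.mul_sum, ← Finset.mul_sum]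
  have h2N : (2:ℚ) ^ N = 2 ^ (N-1) * 2 := by
    rw [← pow_succ]; congr 1; omega
  rw [h2N]
  ring
end

section
/- Let q ≥ 3 be odd, N ≥ 1, and define γ_N(i) = (1/2^N) ∑_{j∈ℤ} (−1)^j dim A_{d+i+jq} where d = (N−1)(q−1)/2 and dim A_m is the coefficient of t^m in (1+t)((1−t^q)/(1−t))^N. Then γ_N(0) = 0, γ_N(i) > 0 for i = 1, ..., q−1, and γ_N(q−i) = γ_N(i) for i = 1,...,q−1. -/
open Finset PowerSeries

namespace Gam

noncomputable def S (q : ℕ) : Polynomial ℚ := ∑ l ∈ Finset.range q, Polynomial.X ^ l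
noncomputable def P (q N : ℕ) : Polynomial ℚ := (1 + Polynomial.X) * S q ^ N

lemma coe_P (q N : ℕ) : ((P q N : Polynomial ℚ) : PowerSeries ℚ)
    = (1 + PowerSeries.X) * (∑ l ∈ Finset.range q, (PowerSeries.X : PowerSeries ℚ) ^ l) ^ N := by
  have hS : ((S q : Polynomial ℚ) : PowerSeries ℚ)
      = ∑ l ∈ Finset.range q, (PowerSeries.X : PowerSeries ℚ) ^ l := by
    unfold S
    classical
    induction (Finset.range q) using Finset.induction with
    | empty => simp
    | insert _ _ h ih => simp [Finset.sum_insert h, Polynomial.coe_add, Polynomial.coe_pow,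
        Polynomial.coe_X, ih]
  unfold P
  rw [Polynomial.coe_mul, Polynomial.coe_pow, hS, Polynomial.coe_add, Polynomial.coe_one,
    Polynomial.coe_X]

lemma dimA_eq (q N : ℕ) (i : ℤ) :
    dimA q N i = if 0 ≤ i then (P q N).coeff i.toNat else 0 := by
  unfold dimA
  split
  · rw [← coe_P, Polynomial.coeff_coe]
  · rfl

lemma coeff_S (q k : ℕ) : (S q).coeff k = if k < q then 1 else 0 := by
  unfold S
  rw [Polynomial.finset_sum_coeff]
  simp only [Polynomial.coeff_X_pow]
  rw [Finset.sum_ite_eq (Finset.range q) k (fun _ => (1:ℚ))]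
  simp [Finset.mem_range]

lemma S_ne_zero {q : ℕ} (hq : 1 ≤ q) : S q ≠ 0 := fun h => by
  have := coeff_S q 0
  rw [h] at this
  rw [if_pos (by omega : 0 < q)] at this
  simp at this

lemma natDegree_S {q : ℕ} (hq : 1 ≤ q) : (S q).natDegree = q - 1 := by
  apply le_antisymm
  · rw [Polynomial.natDegree_le_iff_coeff_eq_zero]
    intro m hm
    rw [coeff_S, if_neg (by omega)]
  · apply Polynomial.le_natDegree_of_ne_zero
    rw [coeff_S, if_pos (by omega)]
    norm_num

lemma X_add_one_ne_zero : (1 + Polynomial.X : Polynomial ℚ) ≠ 0 := by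
  intro h
  have := congrArg (fun p => Polynomial.coeff p 0) h
  simp at this

lemma natDegree_P {q : ℕ} (hq : 1 ≤ q) (N : ℕ) : (P q N).natDegree = 1 + N * (q - 1) := by
  unfold P
  rw [Polynomial.natDegree_mul X_add_one_ne_zero (pow_ne_zero N (S_ne_zero hq)),
    Polynomial.natDegree_pow, natDegree_S hq]
  congr 1
  rw [add_comm]
  exact Polynomial.natDegree_X_add_C 1

lemma reverse_S {q : ℕ} (hq : 1 ≤ q) : (S q).reverse = S q := by
  ext n
  rw [Polynomial.coeff_reverse, natDegree_S hq, coeff_S, coeff_S]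
  rw [← Polynomial.revAtFun_eq]
  simp only [Polynomial.revAtFun]
  split_ifs <;> first | rfl | (exfalso; omega)

lemma reverse_X_add_one : (1 + Polynomial.X : Polynomial ℚ).reverse = 1 + Polynomial.X := by
  have h1 : (1 + Polynomial.X : Polynomial ℚ).natDegree = 1 := by
    rw [add_comm]; exact Polynomial.natDegree_X_add_C 1
  ext n
  rw [Polynomial.coeff_reverse, h1]
  rw [← Polynomial.revAtFun_eq]
  simp only [Polynomial.revAtFun]
  rcases Nat.lt_or_ge n 2 with h | h
  · interval_cases n <;> simp [Polynomial.coeff_one]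
  · rw [if_neg (by omega)]

lemma reverse_S_pow {q : ℕ} (hq : 1 ≤ q) (N : ℕ) : ((S q) ^ N).reverse = (S q) ^ N := by
  induction N with
  | zero => simp [Polynomial.reverse]
  | succ n ih =>
      rw [pow_succ, Polynomial.reverse_mul_of_domain, ih, reverse_S hq]

lemma reverse_P {q : ℕ} (hq : 1 ≤ q) (N : ℕ) : (P q N).reverse = P q N := by
  unfold P
  rw [Polynomial.reverse_mul_of_domain, reverse_X_add_one, reverse_S_pow hq]

lemma coeff_P_symm {q : ℕ} (hq : 1 ≤ q) (N k : ℕ) (hk : k ≤ 1 + N * (q - 1)) :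
    (P q N).coeff (1 + N * (q - 1) - k) = (P q N).coeff k := by
  conv_rhs => rw [← reverse_P hq N]
  rw [Polynomial.coeff_reverse, natDegree_P hq, Polynomial.revAt_le hk]

/-- the top degree, as an integer -/
def D (q N : ℕ) : ℤ := 1 + N * ((q : ℤ) - 1)

lemma D_cast {q : ℕ} (hq : 1 ≤ q) (N : ℕ) : D q N = ((1 + N * (q - 1) : ℕ) : ℤ) := by
  have h1 : ((q - 1 : ℕ) : ℤ) = (q : ℤ) - 1 := by omega
  unfold D
  push_cast [h1]
  ring

lemma D_nonneg {q : ℕ} (hq : 1 ≤ q) (N : ℕ) : 0 ≤ D q N := by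
  rw [D_cast hq]; positivity

lemma dimA_zero_of_neg {q N : ℕ} {x : ℤ} (hx : x < 0) : dimA q N x = 0 := by
  rw [dimA_eq]; simp [not_le.mpr hx]

lemma dimA_zero_of_gt {q N : ℕ} (hq : 1 ≤ q) {x : ℤ} (hx : D q N < x) : dimA q N x = 0 := by
  rw [dimA_eq]
  have h0 : (0:ℤ) ≤ x := le_of_lt (lt_of_le_of_lt (D_nonneg hq N) hx)
  rw [if_pos h0]
  apply Polynomial.coeff_eq_zero_of_natDegree_lt
  rw [natDegree_P hq]
  rw [D_cast hq] at hx
  omega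

lemma dimA_symm {q : ℕ} (hq : 1 ≤ q) (N : ℕ) (x : ℤ) :
    dimA q N (D q N - x) = dimA q N x := by
  rcases lt_or_ge x 0 with hx | hx
  · rw [dimA_zero_of_neg hx, dimA_zero_of_gt hq (by omega)]
  rcases lt_or_ge (D q N) x with hx2 | hx2
  · rw [dimA_zero_of_gt hq hx2, dimA_zero_of_neg (by omega)]
  · rw [dimA_eq, dimA_eq, if_pos hx, if_pos (by omega : (0:ℤ) ≤ D q N - x)]
    obtain ⟨n, rfl⟩ := Int.eq_ofNat_of_zero_le hx
    rw [D_cast hq] at hx2 ⊢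
    have hn : n ≤ 1 + N * (q - 1) := by omega
    rw [show (((1 + N * (q - 1) : ℕ) : ℤ) - n) = ((1 + N * (q-1) - n : ℕ) : ℤ) by push_cast; omega]
    rw [Int.toNat_natCast, Int.toNat_natCast]
    exact coeff_P_symm hq N n hn

lemma P_succ (q N : ℕ) : P q (N + 1) = P q N * S q := by
  unfold P; ring

lemma dimA_rec {q : ℕ} (N : ℕ) (x : ℤ) :
    dimA q (N + 1) x = ∑ l ∈ Finset.range q, dimA q N (x - l) := by
  rcases lt_or_ge x 0 with hx | hx
  · rw [dimA_zero_of_neg hx]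
    exact (Finset.sum_eq_zero fun l _ => dimA_zero_of_neg (by omega)).symm
  obtain ⟨n, rfl⟩ := Int.eq_ofNat_of_zero_le hx
  rw [dimA_eq, if_pos hx, Int.toNat_natCast, P_succ]
  have hPS : (P q N * S q).coeff n = ∑ l ∈ Finset.range q,
      if l ≤ n then (P q N).coeff (n - l) else 0 := by
    unfold S
    rw [Finset.mul_sum, Polynomial.finset_sum_coeff]
    exact Finset.sum_congr rfl fun l _ => Polynomial.coeff_mul_X_pow' _ _ _
  rw [hPS]
  refine Finset.sum_congr rfl fun l _ => ?_
  rw [dimA_eq]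
  rcases Nat.lt_or_ge n l with h | h
  · rw [if_neg (by omega), if_neg (by omega)]
  · rw [if_pos (by omega), if_pos (by omega)]
    congr 1
    omega

noncomputable def F (q N : ℕ) (x : ℤ) : ℚ := ∑ᶠ j : ℤ, (-1 : ℚ) ^ j * dimA q N (x + j * q)

lemma support_finite {q : ℕ} (hq : 1 ≤ q) (N : ℕ) (x : ℤ) :
    (Function.support fun j : ℤ => (-1 : ℚ) ^ j * dimA q N (x + j * q)).Finite := by
  apply Set.Finite.subset (Set.finite_Icc (-(|x| + D q N)) (|x| + D q N))
  intro j hj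
  have hd : dimA q N (x + j * q) ≠ 0 := by
    intro h0; apply hj; simp [h0]
  have h1 : 0 ≤ x + j * q := by
    by_contra h; exact hd (dimA_zero_of_neg (by omega))
  have h2 : x + j * q ≤ D q N := by
    by_contra h; exact hd (dimA_zero_of_gt hq (by omega))
  have hDpos : 0 ≤ D q N := D_nonneg hq N
  have hjq : |j * q| ≤ |x| + D q N := by
    have : |x + j * q| ≤ D q N := abs_le.mpr ⟨by omega, h2⟩
    calc |j * q| = |(x + j * q) - x| := by ring_nf
      _ ≤ |x + j * q| + |x| := abs_sub _ _
      _ ≤ |x| + D q N := by omega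
  have hj1 : |j| ≤ |j * q| := by
    rw [abs_mul]
    have : (1:ℤ) ≤ |(q:ℤ)| := by
      rw [abs_of_nonneg (by positivity)]; exact_mod_cast hq
    nlinarith [abs_nonneg j]
  simp only [Set.mem_Icc]
  constructor <;> [skip; skip] <;>
    · have := abs_le.mp (le_trans hj1 hjq); omega

lemma neg_one_zpow_succ (j : ℤ) : (-1 : ℚ) ^ (j + 1) = -((-1 : ℚ) ^ j) := by
  rw [zpow_add₀ (by norm_num : (-1:ℚ) ≠ 0)]; simp

lemma neg_one_zpow_neg (j : ℤ) : (-1 : ℚ) ^ (-j) = (-1 : ℚ) ^ j := by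
  rw [zpow_neg]
  rcases Int.even_or_odd j with h | h
  · rw [h.neg_one_zpow]; norm_num
  · rw [Odd.neg_one_zpow h]; norm_num

lemma F_antiperiod {q : ℕ} (N : ℕ) (x : ℤ) : F q N (x + q) = -F q N x := by
  unfold F
  have : ∀ j : ℤ, (-1:ℚ) ^ j * dimA q N (x + q + j * q)
      = -((-1:ℚ) ^ (j+1) * dimA q N (x + (j+1) * q)) := by
    intro j
    rw [neg_one_zpow_succ]
    ring_nf
  rw [finsum_congr this, finsum_neg_distrib]
  congr 1
  exact finsum_comp_equiv (Equiv.addRight (1:ℤ)) (f := fun j : ℤ => (-1:ℚ) ^ j * dimA q N (x + j * q))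

lemma F_symm {q : ℕ} (hq : 1 ≤ q) (N : ℕ) (x : ℤ) : F q N (D q N - x) = F q N x := by
  unfold F
  have : ∀ j : ℤ, (-1:ℚ) ^ j * dimA q N (D q N - x + j * q)
      = (-1:ℚ) ^ (-j) * dimA q N (x + (-j) * q) := by
    intro j
    rw [neg_one_zpow_neg]
    congr 1
    rw [show D q N - x + j * q = D q N - (x + (-j) * q) by ring]
    exact dimA_symm hq N _
  rw [finsum_congr this]
  exact finsum_comp_equiv (Equiv.neg ℤ) (f := fun j : ℤ => (-1:ℚ) ^ j * dimA q N (x + j * q))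

lemma F_rec {q : ℕ} (hq : 1 ≤ q) (N : ℕ) (x : ℤ) :
    F q (N + 1) x = ∑ l ∈ Finset.range q, F q N (x - l) := by
  unfold F
  have : ∀ j : ℤ, (-1:ℚ) ^ j * dimA q (N+1) (x + j * q)
      = ∑ l ∈ Finset.range q, (-1:ℚ) ^ j * dimA q N (x - l + j * q) := by
    intro j
    rw [dimA_rec, Finset.mul_sum]
    exact Finset.sum_congr rfl fun l _ => by rw [show x + j*q - l = x - l + j * q by ring]
  rw [finsum_congr this]
  exact finsum_sum_comm (Finset.range q) (fun (j : ℤ) (l : ℕ) => (-1:ℚ) ^ j * dimA q N (x - l + j * q)) (fun l _ => support_finite hq N (x - l))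

end Gam

namespace Gam

lemma gam_eq (q N : ℕ) (i : ℤ) :
    gam q N i = (1 / 2 ^ N) * F q N (((N : ℤ) - 1) * ((q : ℤ) - 1) / 2 + i) := rfl

end Gam

namespace Gam

/-- the shift `d = (N-1)(q-1)/2` -/
def dInt (q N : ℕ) : ℤ := ((N : ℤ) - 1) * ((q : ℤ) - 1) / 2

lemma gam_eq' (q N : ℕ) (i : ℤ) : gam q N i = (1 / 2 ^ N) * F q N (dInt q N + i) := rfl

lemma dInt_eq (q N : ℕ) {m : ℤ} (hm : (q : ℤ) = 2 * m + 1) :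
    dInt q N = ((N : ℤ) - 1) * m := by
  unfold dInt
  rw [hm, show 2 * m + 1 - 1 = 2 * m by ring, show ((N:ℤ) - 1) * (2 * m) = 2 * (((N:ℤ)-1) * m) by ring]
  exact Int.mul_ediv_cancel_left _ two_ne_zero

lemma dInt_succ (q N : ℕ) {m : ℤ} (hm : (q : ℤ) = 2 * m + 1) :
    dInt q (N + 1) = dInt q N + m := by
  rw [dInt_eq q N hm, dInt_eq q (N+1) hm]
  push_cast
  ring

lemma D_sub_dInt (q N : ℕ) {m : ℤ} (hm : (q : ℤ) = 2 * m + 1) :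
    D q N - dInt q N = dInt q N + q := by
  rw [dInt_eq q N hm]
  unfold D
  rw [hm]
  ring

lemma F_d_zero {q : ℕ} (hq : 1 ≤ q) {m : ℤ} (hm : (q : ℤ) = 2 * m + 1) (N : ℕ) :
    F q N (dInt q N) = 0 := by
  have h1 := F_symm hq N (dInt q N)
  rw [show D q N - dInt q N = dInt q N + q from D_sub_dInt q N hm,
    F_antiperiod N (dInt q N)] at h1
  linarith

lemma F_d_symm {q : ℕ} (hq : 1 ≤ q) {m : ℤ} (hm : (q : ℤ) = 2 * m + 1) (N : ℕ) (i : ℤ) :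
    F q N (dInt q N + ((q : ℤ) - i)) = F q N (dInt q N + i) := by
  have h1 := F_symm hq N (dInt q N + i)
  rw [show D q N - (dInt q N + i) = dInt q N + ((q:ℤ) - i) by
    have := D_sub_dInt q N hm; omega] at h1
  exact h1

lemma dimA_one_val {q : ℕ} (hq3 : 3 ≤ q) {i : ℤ} (h1 : 1 ≤ i) (h2 : i ≤ (q:ℤ) - 1) :
    dimA q 1 i = 2 := by
  have hq : 1 ≤ q := by omega
  obtain ⟨n, rfl⟩ := Int.eq_ofNat_of_zero_le (by omega : (0:ℤ) ≤ i)
  obtain ⟨k, rfl⟩ : ∃ k, n = k + 1 := ⟨n - 1, by omega⟩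
  rw [dimA_eq, if_pos (by omega), Int.toNat_natCast]
  unfold P
  rw [pow_one, add_mul, one_mul, Polynomial.coeff_add, Polynomial.coeff_X_mul,
    coeff_S, coeff_S, if_pos (by omega), if_pos (by omega)]
  norm_num

lemma F_one {q : ℕ} (hq3 : 3 ≤ q) {i : ℤ} (h1 : 1 ≤ i) (h2 : i ≤ (q:ℤ) - 1) :
    F q 1 i = 2 := by
  have hq : 1 ≤ q := by omega
  have hqz : (1:ℤ) ≤ q := by exact_mod_cast hq
  unfold F
  rw [finsum_eq_single _ (0 : ℤ) ?_]
  · simp only [zpow_zero, zero_mul, add_zero, one_mul]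
    exact dimA_one_val hq3 h1 h2
  · intro j hj
    have hD1 : D q 1 = (q : ℤ) := by unfold D; push_cast; ring
    rcases lt_or_ge 0 j with hjp | hjn
    · have : (q:ℤ) ≤ j * q := le_mul_of_one_le_left (by omega) (by omega)
      rw [dimA_zero_of_gt hq (by omega), mul_zero]
    · have hj1 : j ≤ -1 := by omega
      have : j * q ≤ -q := by nlinarith
      rw [dimA_zero_of_neg (by omega), mul_zero]

lemma odd_sum_zero (φ : ℤ → ℚ) (hneg : ∀ j, φ (-j) = -φ j) (a : ℤ) :
    ∑ k ∈ Finset.Icc (-a) a, φ k = 0 := by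
  have h : ∑ k ∈ Finset.Icc (-a) a, φ k = ∑ k ∈ Finset.Icc (-a) a, φ (-k) := by
    refine Finset.sum_nbij' (fun k : ℤ => -k) (fun k : ℤ => -k) ?_ ?_ ?_ ?_ ?_ <;>
      intro x hx <;> simp_all [Finset.mem_Icc] <;> omega
  have h2 : ∑ k ∈ Finset.Icc (-a) a, φ (-k) = -∑ k ∈ Finset.Icc (-a) a, φ k := by
    rw [← Finset.sum_neg_distrib]
    exact Finset.sum_congr rfl fun k _ => hneg k
  linarith [h.trans h2]

lemma F_pos {q : ℕ} (hq3 : 3 ≤ q) {m : ℤ} (hm : (q : ℤ) = 2 * m + 1) :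
    ∀ N : ℕ, ∀ i : ℤ, 1 ≤ i → i ≤ (q:ℤ) - 1 → 0 < F q (N + 1) (dInt q (N + 1) + i) := by
  have hq : 1 ≤ q := by omega
  have hm1 : 1 ≤ m := by omega
  intro N
  induction N with
  | zero =>
      intro i h1 h2
      rw [show dInt q 1 + i = i by rw [dInt_eq q 1 hm]; push_cast; ring]
      rw [F_one hq3 h1 h2]
      norm_num
  | succ n ih =>
      -- key: the claim for 1 ≤ i ≤ m
      have key : ∀ i : ℤ, 1 ≤ i → i ≤ m → 0 < F q (n + 1 + 1) (dInt q (n + 1 + 1) + i) := by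
        intro i h1 h2
        set φ : ℤ → ℚ := fun j => F q (n+1) (dInt q (n+1) + j) with hφ
        have hφ_anti : ∀ j : ℤ, φ (j + q) = -φ j := by
          intro j
          show F q (n+1) (dInt q (n+1) + (j + q)) = -F q (n+1) (dInt q (n+1) + j)
          rw [show dInt q (n+1) + (j + q) = (dInt q (n+1) + j) + q by ring]
          exact F_antiperiod _ _
        have hφ_symm : ∀ j : ℤ, φ ((q:ℤ) - j) = φ j := fun j => F_d_symm hq hm (n+1) j
        have hφ_zero : φ 0 = 0 := by
          show F q (n+1) (dInt q (n+1) + 0) = 0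
          rw [add_zero]; exact F_d_zero hq hm (n+1)
        have hφ_neg : ∀ j : ℤ, φ (-j) = -φ j := by
          intro j
          have h3 := hφ_anti (-j)
          rw [show -j + (q:ℤ) = (q:ℤ) - j by ring, hφ_symm j] at h3
          linarith
        have hφ_pos : ∀ j : ℤ, 1 ≤ j → j ≤ (q:ℤ) - 1 → 0 < φ j := fun j hj1 hj2 => ih j hj1 hj2
        -- rewrite via recursion
        rw [F_rec hq (n+1) _]
        have hstep : ∀ l ∈ Finset.range q,
            F q (n+1) (dInt q (n+1+1) + i - l) = φ (m + i - l) := by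
          intro l _
          show _ = F q (n+1) (dInt q (n+1) + (m + i - l))
          rw [dInt_succ q (n+1) hm]
          ring_nf
        rw [Finset.sum_congr rfl hstep]
        have hre : ∑ l ∈ Finset.range q, φ (m + i - l)
            = ∑ k ∈ Finset.Icc (i - m) (i + m), φ k := by
          refine Finset.sum_nbij' (fun l : ℕ => m + i - l) (fun k : ℤ => (m + i - k).toNat)
            ?_ ?_ ?_ ?_ ?_ <;>
            intro x hx <;> simp_all only [Finset.mem_range, Finset.mem_Icc] <;> omega
        rw [hre]
        have hset : Finset.Icc (i - m) (i + m)
            = Finset.Icc (i - m) (m - i) ∪ Finset.Icc (m - i + 1) (i + m) := by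
          ext k; simp only [Finset.mem_Icc, Finset.mem_union]; omega
        have hdisj : Disjoint (Finset.Icc (i - m) (m - i)) (Finset.Icc (m - i + 1) (i + m)) := by
          rw [Finset.disjoint_left]
          intro k hk1 hk2
          simp only [Finset.mem_Icc] at hk1 hk2
          omega
        rw [hset, Finset.sum_union hdisj,
          show i - m = -(m - i) by ring, odd_sum_zero φ hφ_neg (m - i), zero_add]
        apply Finset.sum_pos
        · intro k hk
          simp only [Finset.mem_Icc] at hk
          exact hφ_pos k (by omega) (by omega)
        · exact Finset.nonempty_Icc.mpr (by omega)
      intro i h1 h2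
      rcases le_or_gt i m with h | h
      · exact key i h1 h
      · rw [← F_d_symm hq hm (n+1+1) i]
        exact key ((q:ℤ) - i) (by omega) (by omega)

end Gam

/-- Lemma 2.8 of the paper: for odd `q ≥ 3` and `N ≥ 1`, one has `γ_N(0) = 0`,
`γ_N(i) > 0` for `i = 1,…,q−1`, and `γ_N(q−i) = γ_N(i)` for `i = 1,…,q−1`. -/
theorem gam_zero_pos_symm (q : ℕ) (hq : Odd q) (hq3 : 3 ≤ q) (N : ℕ) (hN : 1 ≤ N) :
    gam q N 0 = 0 ∧
      (∀ i : ℕ, 1 ≤ i → i ≤ q - 1 → 0 < gam q N i) ∧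
      (∀ i : ℕ, 1 ≤ i → i ≤ q - 1 → gam q N ((q : ℤ) - i) = gam q N i) := by
  obtain ⟨c, hc⟩ := hq
  have hm : (q : ℤ) = 2 * (c : ℤ) + 1 := by omega
  have hq1 : 1 ≤ q := by omega
  refine ⟨?_, ?_, ?_⟩
  · rw [Gam.gam_eq', add_zero, Gam.F_d_zero hq1 hm N, mul_zero]
  · intro i h1 h2
    rw [Gam.gam_eq']
    have hpos : 0 < Gam.F q N (Gam.dInt q N + (i : ℤ)) := by
      obtain ⟨N', rfl⟩ : ∃ N', N = N' + 1 := ⟨N - 1, by omega⟩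
      exact Gam.F_pos hq3 hm N' (i : ℤ) (by exact_mod_cast h1) (by omega)
    positivity
  · intro i h1 h2
    rw [Gam.gam_eq', Gam.gam_eq', Gam.F_d_symm hq1 hm N (i : ℤ)]
end

section
/- Let p > 2, q = p, and C = A/((x_0^2+...+x_N^2, x_1^p,...,x_N^p) : x_0^p) where A = k[x_0,...,x_N]/(∑x_i^2, x_1^p,...,x_N^p). Then C is a graded zero-dimensional Gorenstein ring whose Hilbert function is symmetric about d_N = (N−1)(p−1)/2: dim C_{2d_N − i} = dim C_i for all integers i, and C_i ≠ 0 if and only if 0 ≤ i ≤ 2d_N. -/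
open MvPolynomial Finset

/-- The dimension of the degree-`d` graded piece of the quotient of `k[x_i]` by the
homogeneous ideal `J`. -/
noncomputable def pieceDim {k : Type*} [Field k] {σ : Type*}
    (J : Ideal (MvPolynomial σ k)) (d : ℕ) : ℕ :=
  Module.finrank k
    (↥(MvPolynomial.homogeneousSubmodule σ k d) ⧸
      (Submodule.comap (MvPolynomial.homogeneousSubmodule σ k d).subtype
        (J.restrictScalars k)))

/-- The same, indexed by integers (zero in negative degrees). -/
noncomputable def pieceDimZ {k : Type*} [Field k] {σ : Type*}
    (J : Ideal (MvPolynomial σ k)) (d : ℤ) : ℕ :=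
  if 0 ≤ d then pieceDim J d.toNat else 0


set_option maxHeartbeats 1000000
set_option synthInstance.maxHeartbeats 400000
namespace HilbC
variable (k : Type*) [Field k] (p n : ℕ)
noncomputable def JB : Ideal (MvPolynomial (Fin (n+1)) k) :=
  Ideal.span (Set.range fun i : Fin (n+1) => (X i : MvPolynomial (Fin (n+1)) k) ^ p)
noncomputable abbrev Bq := MvPolynomial (Fin (n+1)) k ⧸ JB k p n
noncomputable def sbar : Bq k p n := Ideal.Quotient.mk _ (∑ i, X i ^ 2)
noncomputable def fpoly : Polynomial (Bq k p n) :=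
  Polynomial.X ^ 2 + Polynomial.C (sbar k p n)
lemma fpoly_monic : (fpoly k p n).Monic :=
  Polynomial.monic_X_pow_add_C _ (by norm_num)
noncomputable abbrev Aq := AdjoinRoot (fpoly k p n)
noncomputable def hAR : IsAdjoinRootMonic (Aq k p n) (fpoly k p n) :=
  AdjoinRoot.isAdjoinRootMonic _ (fpoly_monic k p n)

/-- the socle exponent `(p-1, …, p-1)`. -/
noncomputable def wB : Fin (n+1) →₀ ℕ :=
  Finsupp.equivFunOnFinite.symm (fun _ => p - 1)

lemma wB_apply (i : Fin (n+1)) : wB p n i = p - 1 := rfl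

lemma JB_le_ker (hp : 2 < p) :
    (JB k p n).restrictScalars k ≤ LinearMap.ker (lcoeff k (wB p n)) := by
  intro f hf
  simp only [Submodule.restrictScalars_mem, JB] at hf
  have : Set.range (fun i : Fin (n+1) => (X i : MvPolynomial (Fin (n+1)) k) ^ p)
      = (fun s => monomial s (1:k)) '' (Set.range fun i : Fin (n+1) => Finsupp.single i p) := by
    rw [← Set.range_comp]
    refine congrArg _ (funext fun i => ?_)
    simp [Function.comp, X_pow_eq_monomial]
  rw [this] at hf
  rw [mem_ideal_span_monomial_image] at hf
  simp only [LinearMap.mem_ker, lcoeff_apply]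
  by_contra hc
  obtain ⟨si, ⟨i, rfl⟩, hle⟩ := hf _ (mem_support_iff.mpr hc)
  have := hle i
  simp [Finsupp.single_apply, wB_apply] at this
  omega

/-- the socle coefficient functional on `B`. -/
noncomputable def lamB (hp : 2 < p) : Bq k p n →ₗ[k] k :=
  (Submodule.liftQ ((JB k p n).restrictScalars k) (lcoeff k (wB p n))
      (JB_le_ker k p n hp)).comp
    (Submodule.Quotient.restrictScalarsEquiv k
      (JB k p n : Submodule (MvPolynomial (Fin (n+1)) k) (MvPolynomial (Fin (n+1)) k))).symm.toLinearMap

lemma lamB_mk (hp : 2 < p) (f : MvPolynomial (Fin (n+1)) k) :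
    lamB k p n hp (Ideal.Quotient.mk (JB k p n) f) = coeff (wB p n) f := by
  rfl


-- the coordinate of `root` functional, B-linear
noncomputable def coordB : Aq k p n →ₗ[k] Bq k p n :=
  ((Polynomial.lcoeff (Bq k p n) 1).comp (hAR k p n).modByMonicHom).restrictScalars k

lemma one_not_mem_JB (hp : 0 < p) : (1 : MvPolynomial (Fin (n+1)) k) ∉ JB k p n := by
  rw [JB]
  have : Set.range (fun i : Fin (n+1) => (X i : MvPolynomial (Fin (n+1)) k) ^ p)
      = (fun s => monomial s (1:k)) '' (Set.range fun i : Fin (n+1) => Finsupp.single i p) := by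
    rw [← Set.range_comp]
    refine congrArg _ (funext fun i => ?_)
    simp [Function.comp, X_pow_eq_monomial]
  rw [this, mem_ideal_span_monomial_image]
  intro h
  obtain ⟨si, ⟨i, rfl⟩, hle⟩ := h 0 (mem_support_iff.mpr (by simp))
  have := hle i
  simp [Finsupp.single_apply] at this
  omega

lemma Bq_nontrivial (hp : 0 < p) : Nontrivial (Bq k p n) := by
  refine Ideal.Quotient.nontrivial_iff.mpr ?_
  intro h
  exact one_not_mem_JB k p n hp (h ▸ Submodule.mem_top)

lemma fpoly_degree (hp : 0 < p) : (fpoly k p n).degree = 2 := by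
  haveI := Bq_nontrivial k p n hp
  exact Polynomial.degree_X_pow_add_C (by norm_num) _

lemma coordB_mk (hp : 0 < p) (g : Polynomial (Bq k p n)) (hg : g.degree < 2) :
    coordB k p n (AdjoinRoot.mk (fpoly k p n) g) = g.coeff 1 := by
  haveI := Bq_nontrivial k p n hp
  have hmap : AdjoinRoot.mk (fpoly k p n) g = (hAR k p n).map g := by
    rw [hAR, AdjoinRoot.isAdjoinRootMonic]
    rfl
  rw [coordB, hmap]
  simp only [LinearMap.restrictScalars_apply, LinearMap.comp_apply,
    IsAdjoinRootMonic.modByMonicHom_map]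
  have hself : g %ₘ fpoly k p n = g :=
    (Polynomial.modByMonic_eq_self_iff (fpoly_monic k p n)).mpr
      (by rw [fpoly_degree k p n hp]; exact hg)
  rw [hself]
  rfl

lemma coordB_of (hp : 0 < p) (b : Bq k p n) :
    coordB k p n (algebraMap (Bq k p n) (Aq k p n) b) = 0 := by
  have : algebraMap (Bq k p n) (Aq k p n) b = AdjoinRoot.mk _ (Polynomial.C b) := rfl
  rw [this, coordB_mk k p n hp]
  · simp
  · exact lt_of_le_of_lt Polynomial.degree_C_le (by norm_num)

lemma coordB_mul_root (hp : 0 < p) (b : Bq k p n) :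
    coordB k p n (algebraMap (Bq k p n) (Aq k p n) b * AdjoinRoot.root _) = b := by
  have : algebraMap (Bq k p n) (Aq k p n) b * AdjoinRoot.root _
      = AdjoinRoot.mk _ (Polynomial.C b * Polynomial.X) := rfl
  rw [this, coordB_mk k p n hp]
  · simp
  · refine lt_of_le_of_lt ?_ (by norm_num : (1 : WithBot ℕ) < 2)
    rw [Polynomial.C_mul_X_eq_monomial]
    exact Polynomial.degree_monomial_le _ _

lemma root_sq :
    AdjoinRoot.root (fpoly k p n) ^ 2
      = - algebraMap (Bq k p n) (Aq k p n) (sbar k p n) := by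
  have h : AdjoinRoot.mk (fpoly k p n)
      (Polynomial.X ^ 2 + Polynomial.C (sbar k p n)) = 0 := AdjoinRoot.mk_self
  rw [map_add, map_pow, AdjoinRoot.mk_X, AdjoinRoot.mk_C] at h
  rw [AdjoinRoot.algebraMap_eq]
  linear_combination h

noncomputable def lamA (hp : 2 < p) : Aq k p n →ₗ[k] k :=
  (lamB k p n hp).comp (coordB k p n)

lemma lamA_of (hp : 2 < p) (b : Bq k p n) :
    lamA k p n hp (algebraMap (Bq k p n) (Aq k p n) b) = 0 := by
  have h := coordB_of k p n (by omega : 0 < p) b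
  simp only [lamA, LinearMap.comp_apply, h, map_zero]

lemma lamA_mul_root (hp : 2 < p) (b : Bq k p n) :
    lamA k p n hp (algebraMap (Bq k p n) (Aq k p n) b * AdjoinRoot.root _)
      = lamB k p n hp b := by
  have h := coordB_mul_root k p n (by omega : 0 < p) b
  simp only [lamA, LinearMap.comp_apply, h]

noncomputable def phi : MvPolynomial (Fin (n+2)) k →ₐ[k] Aq k p n :=
  aeval (fun j => (Fin.cases (AdjoinRoot.root (fpoly k p n))
    (fun i => algebraMap (Bq k p n) (Aq k p n) (Ideal.Quotient.mk (JB k p n) (X i))) j))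

lemma phi_X0 : phi k p n (X 0) = AdjoinRoot.root (fpoly k p n) := by
  simp [phi]

lemma phi_Xsucc (i : Fin (n+1)) :
    phi k p n (X i.succ)
      = algebraMap (Bq k p n) (Aq k p n) (Ideal.Quotient.mk (JB k p n) (X i)) := by
  simp [phi]

/-- monomial `x_1^{c_0} ⋯ x_{n+1}^{c_n}` in the big ring. -/
noncomputable def mu (c : Fin (n+1) → ℕ) : MvPolynomial (Fin (n+2)) k :=
  ∏ i, X i.succ ^ c i

/-- monomial `x^c` in the small ring. -/
noncomputable def xp (c : Fin (n+1) → ℕ) : MvPolynomial (Fin (n+1)) k :=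
  ∏ i, X i ^ c i

noncomputable def s1 : MvPolynomial (Fin (n+1)) k := ∑ i, X i ^ 2

lemma phi_mu (c : Fin (n+1) → ℕ) :
    phi k p n (mu k n c)
      = algebraMap (Bq k p n) (Aq k p n) (Ideal.Quotient.mk (JB k p n) (xp k n c)) := by
  rw [mu, xp, map_prod, map_prod, map_prod]
  refine Finset.prod_congr rfl fun i _ => ?_
  rw [map_pow, map_pow, map_pow, phi_Xsucc]

lemma root_pow_even (r : ℕ) :
    AdjoinRoot.root (fpoly k p n) ^ (2*r)
      = algebraMap (Bq k p n) (Aq k p n) ((-(sbar k p n))^r) := by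
  induction r with
  | zero => simp
  | succ r ih =>
    have : 2*(r+1) = 2*r + 2 := by ring
    rw [this, pow_add, ih, root_sq, pow_succ, map_mul, map_neg]

lemma root_pow_odd (r : ℕ) :
    AdjoinRoot.root (fpoly k p n) ^ (2*r+1)
      = algebraMap (Bq k p n) (Aq k p n) ((-(sbar k p n))^r) * AdjoinRoot.root _ := by
  rw [pow_add, root_pow_even, pow_one]

noncomputable def lam (hp : 2 < p) : MvPolynomial (Fin (n+2)) k →ₗ[k] k :=
  (lamA k p n hp).comp (phi k p n).toLinearMap

lemma lam_apply (hp : 2 < p) (f : MvPolynomial (Fin (n+2)) k) :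
    lam k p n hp f = lamA k p n hp (phi k p n f) := rfl

lemma VAL0 (hp : 2 < p) (r : ℕ) (c : Fin (n+1) → ℕ) :
    lam k p n hp (X 0 ^ (2*r) * mu k n c) = 0 := by
  rw [lam_apply, map_mul, map_pow, phi_X0, phi_mu, root_pow_even, ← map_mul]
  exact lamA_of k p n hp _

lemma VAL1 (hp : 2 < p) (r : ℕ) (c : Fin (n+1) → ℕ) :
    lam k p n hp (X 0 ^ (2*r+1) * mu k n c)
      = (-1:k)^r * coeff (wB p n) (s1 k n ^ r * xp k n c) := by
  rw [lam_apply, map_mul, map_pow, phi_X0, phi_mu, root_pow_odd]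
  rw [mul_comm (algebraMap _ _ ((-(sbar k p n))^r)) (AdjoinRoot.root _), mul_assoc,
    ← map_mul, mul_comm (AdjoinRoot.root _)]
  rw [lamA_mul_root]
  have hs : (-(sbar k p n))^r * Ideal.Quotient.mk (JB k p n) (xp k n c)
      = Ideal.Quotient.mk (JB k p n) ((C ((-1:k)^r)) * (s1 k n ^ r * xp k n c)) := by
    rw [sbar, ← map_neg, ← map_pow, ← map_mul]
    congr 1
    rw [show -(∑ i, (X i:MvPolynomial (Fin (n+1)) k) ^ 2) = (-1 : MvPolynomial (Fin (n+1)) k) * s1 k n by rw [s1]; ring]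
    rw [mul_pow, ← C_1, ← C_neg, ← C_pow]
    ring
  rw [hs, lamB_mk, coeff_C_mul]

noncomputable def IAdef : Ideal (MvPolynomial (Fin (n+2)) k) :=
  Ideal.span ({∑ i, X i ^ 2} ∪
    Set.range fun i : Fin (n+1) => (X i.succ : MvPolynomial (Fin (n+2)) k) ^ p)

lemma phi_IA {h : MvPolynomial (Fin (n+2)) k} (hh : h ∈ IAdef k p n) :
    phi k p n h = 0 := by
  have hle : IAdef k p n ≤ RingHom.ker (phi k p n).toRingHom := by
    rw [IAdef, Ideal.span_le]
    rintro f (hf | ⟨i, rfl⟩)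
    · rw [Set.mem_singleton_iff] at hf
      subst hf
      simp only [SetLike.mem_coe, RingHom.mem_ker, AlgHom.toRingHom_eq_coe,
        RingHom.coe_coe, map_sum, map_pow]
      rw [Fin.sum_univ_succ]
      simp only [phi_X0, phi_Xsucc]
      rw [root_sq]
      have : ∑ i : Fin (n+1),
          (algebraMap (Bq k p n) (Aq k p n)) ((Ideal.Quotient.mk (JB k p n)) (X i)) ^ 2
          = algebraMap (Bq k p n) (Aq k p n) (sbar k p n) := by
        rw [sbar, map_sum, map_sum]
        exact Finset.sum_congr rfl fun i _ => by rw [map_pow, map_pow]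
      rw [this]
      ring
    · simp only [SetLike.mem_coe, RingHom.mem_ker, AlgHom.toRingHom_eq_coe,
        RingHom.coe_coe, map_pow, phi_Xsucc]
      rw [← map_pow, ← map_pow]
      have : (Ideal.Quotient.mk (JB k p n)) ((X i : MvPolynomial (Fin (n+1)) k) ^ p) = 0 := by
        rw [Ideal.Quotient.eq_zero_iff_mem]
        exact Ideal.subset_span ⟨i, rfl⟩
      rw [this, map_zero]
  exact hle hh

lemma lam_IA_mul (hp : 2 < p) {h : MvPolynomial (Fin (n+2)) k}
    (g : MvPolynomial (Fin (n+2)) k) (hh : h ∈ IAdef k p n) :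
    lam k p n hp (h * g) = 0 := by
  rw [lam_apply, map_mul, phi_IA k p n hh, zero_mul, map_zero]

lemma mu_add (c c' : Fin (n+1) → ℕ) :
    mu k n (c + c') = mu k n c * mu k n c' := by
  rw [mu, mu, mu, ← Finset.prod_mul_distrib]
  exact Finset.prod_congr rfl fun i _ => by rw [Pi.add_apply, pow_add]

lemma mu_pi_single (j : Fin (n+1)) (t : ℕ) :
    mu k n (Pi.single j t) = X j.succ ^ t := by
  rw [mu, Finset.prod_eq_single j]
  · rw [Pi.single_eq_same]
  · intro i _ hij
    rw [Pi.single_eq_of_ne hij, pow_zero]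
  · intro h
    exact absurd (Finset.mem_univ j) h

lemma xp_eq_monomial (c : Fin (n+1) → ℕ) :
    xp k n c = monomial (Finsupp.equivFunOnFinite.symm c) 1 := by
  have h1 : ∏ x ∈ (Finsupp.equivFunOnFinite.symm c).support,
      (X x : MvPolynomial (Fin (n+1)) k) ^ (Finsupp.equivFunOnFinite.symm c) x
      = ∏ x, (X x : MvPolynomial (Fin (n+1)) k) ^ c x := by
    rw [Finset.prod_subset (Finset.subset_univ _)]
    · exact Finset.prod_congr rfl fun x _ => by simp
    · intro x _ hx
      have : (Finsupp.equivFunOnFinite.symm c) x = 0 := Finsupp.notMem_support_iff.mp hx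
      rw [this, pow_zero]
  rw [xp, ← h1, prod_X_pow_eq_monomial]

lemma homog_X0_mu (E : ℕ) (c : Fin (n+1) → ℕ) :
    ((X 0 : MvPolynomial (Fin (n+2)) k) ^ E * mu k n c).IsHomogeneous (E + ∑ i, c i) :=
  (isHomogeneous_X_pow 0 E).mul
    (IsHomogeneous.prod _ _ _ (fun i _ => isHomogeneous_X_pow i.succ (c i)))

noncomputable def Psi (ea : Fin 2 × (Fin (n+1) → Fin p)) : MvPolynomial (Fin (n+2)) k :=
  X 0 ^ (ea.1 : ℕ) * mu k n (fun i => (ea.2 i : ℕ))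

def degi (ea : Fin 2 × (Fin (n+1) → Fin p)) : ℕ := (ea.1 : ℕ) + ∑ i, (ea.2 i : ℕ)

noncomputable def Tsub (d : ℕ) : Submodule k (MvPolynomial (Fin (n+2)) k) :=
  (IAdef k p n).restrictScalars k ⊔
    Submodule.span k (Psi k p n '' {j | degi p n j = d})

lemma sum_pi_single_two (j : Fin (n+1)) {t : ℕ} :
    ∑ i, (Pi.single j t : Fin (n+1) → ℕ) i = t := by
  rw [Finset.sum_eq_single j]
  · rw [Pi.single_eq_same]
  · intro i _ hij
    rw [Pi.single_eq_of_ne hij]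
  · intro h
    exact absurd (Finset.mem_univ j) h

lemma mono_mem_T (hp : 2 < p) : ∀ (E : ℕ) (c : Fin (n+1) → ℕ),
    (X 0 : MvPolynomial (Fin (n+2)) k) ^ E * mu k n c ∈ Tsub k p n (E + ∑ i, c i) := by
  intro E
  induction E using Nat.strong_induction_on with
  | _ E ih =>
  intro c
  by_cases hbig : ∃ i, p ≤ c i
  · obtain ⟨i, hi⟩ := hbig
    have hc : c = (fun j => c j - (Pi.single i p : Fin (n+1) → ℕ) j) + (Pi.single i p : Fin (n+1) → ℕ) := by
      funext j
      by_cases hj : j = i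
      · subst hj; simp only [Pi.add_apply, Pi.single_eq_same]; omega
      · simp [Pi.single_eq_of_ne hj]
    have hfact : X 0 ^ E * mu k n c
        = (X 0 ^ E * mu k n (fun j => c j - (Pi.single i p : Fin (n+1) → ℕ) j)) * X i.succ ^ p := by
      conv_lhs => rw [hc]
      rw [mu_add, mu_pi_single]
      ring
    refine Submodule.mem_sup_left ?_
    show _ ∈ IAdef k p n
    rw [hfact]
    exact Ideal.mul_mem_left _ _ (Ideal.subset_span (Or.inr ⟨i, rfl⟩))
  · push_neg at hbig
    by_cases hE : E ≤ 1
    · refine Submodule.mem_sup_right (Submodule.subset_span ?_)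
      refine ⟨(⟨E, by omega⟩, fun i => ⟨c i, hbig i⟩), ?_, ?_⟩
      · show degi p n _ = E + ∑ i, c i
        rfl
      · rfl
    · push_neg at hE
      obtain ⟨E', rfl⟩ : ∃ E', E = E' + 2 := ⟨E - 2, by omega⟩
      have h1 : ∀ j : Fin (n+1), mu k n (c + (Pi.single j 2 : Fin (n+1) → ℕ))
          = mu k n c * X (Fin.succ j) ^ 2 := fun j => by rw [mu_add, mu_pi_single]
      have hsum : (∑ j : Fin (n+1), (X 0:MvPolynomial (Fin (n+2)) k) ^ E' * mu k n (c + (Pi.single j 2 : Fin (n+1) → ℕ)))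
          = (X 0 ^ E' * mu k n c) * ∑ j : Fin (n+1), X (Fin.succ j) ^ 2 := by
        rw [Finset.mul_sum]
        exact Finset.sum_congr rfl fun j _ => by rw [h1]; ring
      have key : (X 0 : MvPolynomial (Fin (n+2)) k) ^ (E'+2) * mu k n c
          = (X 0 ^ E' * mu k n c) * (∑ j : Fin (n+2), X j ^ 2)
            - ∑ j : Fin (n+1), X 0 ^ E' * mu k n (c + (Pi.single j 2 : Fin (n+1) → ℕ)) := by
        rw [hsum, Fin.sum_univ_succ]
        ring
      rw [key]
      refine Submodule.sub_mem _ (Submodule.mem_sup_left ?_) (Submodule.sum_mem _ fun j _ => ?_)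
      · exact Ideal.mul_mem_left _ _ (Ideal.subset_span (Or.inl rfl))
      · have hIH := ih E' (by omega) (c + (Pi.single j 2 : Fin (n+1) → ℕ))
        have hdeg : E' + ∑ i, (c + (Pi.single j 2 : Fin (n+1) → ℕ)) i = E' + 2 + ∑ i, c i := by
          simp only [Pi.add_apply, Finset.sum_add_distrib, sum_pi_single_two]
          omega
        rwa [hdeg] at hIH

lemma monomial_split (m : Fin (n+2) →₀ ℕ) :
    monomial m (1:k) = X 0 ^ (m 0) * mu k n (fun i => m i.succ) := by
  have h1 : ∏ x ∈ m.support, (X x : MvPolynomial (Fin (n+2)) k) ^ m x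
      = ∏ x, (X x : MvPolynomial (Fin (n+2)) k) ^ m x := by
    rw [Finset.prod_subset (Finset.subset_univ _)]
    intro x _ hx
    rw [Finsupp.notMem_support_iff.mp hx, pow_zero]
  rw [← prod_X_pow_eq_monomial, h1, Fin.prod_univ_succ]
  rfl

lemma degree_split (m : Fin (n+2) →₀ ℕ) :
    m.degree = m 0 + ∑ i : Fin (n+1), m i.succ := by
  rw [Finsupp.degree_apply]
  rw [Finset.sum_subset (Finset.subset_univ _)]
  · rw [Fin.sum_univ_succ]
  · intro x _ hx
    exact Finsupp.notMem_support_iff.mp hx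

lemma span_piece (hp : 2 < p) (d : ℕ) {f : MvPolynomial (Fin (n+2)) k}
    (hf : f ∈ homogeneousSubmodule (Fin (n+2)) k d) : f ∈ Tsub k p n d := by
  rw [mem_homogeneousSubmodule] at hf
  have hrepr : f = ∑ m ∈ f.support, monomial m (coeff m f) :=
    (support_sum_monomial_coeff f).symm
  rw [hrepr]
  refine Submodule.sum_mem _ fun m hm => ?_
  have hdeg : (m 0) + ∑ i : Fin (n+1), m i.succ = d := by
    rw [← degree_split]
    rw [Finsupp.degree_eq_weight_one]
    exact hf (mem_support_iff.mp hm)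
  have hmono : monomial m (coeff m f)
      = coeff m f • (X 0 ^ (m 0) * mu k n (fun i => m i.succ)) := by
    rw [← monomial_split, smul_monomial, smul_eq_mul, mul_one]
  rw [hmono]
  exact Submodule.smul_mem _ _ (hdeg ▸ mono_mem_T k p n hp (m 0) _)

lemma coeff_s1_pow (j : Fin (n+1)) (r : ℕ) :
    coeff (Finsupp.single j (2*r)) (s1 k n ^ r) = (1:k) := by
  induction r with
  | zero => simp
  | succ r ih =>
    rw [pow_succ, s1, Finset.mul_sum, coeff_sum, Finset.sum_eq_single j]
    · rw [X_pow_eq_monomial,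
        show Finsupp.single j (2*(r+1)) = Finsupp.single j (2*r) + Finsupp.single j 2 by
          rw [← Finsupp.single_add]; congr 1,
        coeff_mul_monomial]
      rw [← s1, ih, mul_one]
    · intro i _ hij
      rw [X_pow_eq_monomial, coeff_mul_monomial', if_neg]
      intro hle
      have h2 := hle i
      rw [Finsupp.single_eq_same, Finsupp.single_eq_of_ne' (by exact fun h => hij h.symm)] at h2
      omega
    · intro h
      exact absurd (Finset.mem_univ j) h

lemma coeff_wB_xp (c : Fin (n+1) → ℕ) :
    coeff (wB p n) (xp k n c) = if (∀ i, c i = p - 1) then (1:k) else 0 := by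
  rw [xp_eq_monomial, coeff_monomial]
  by_cases h : ∀ i, c i = p - 1
  · rw [if_pos, if_pos h]
    ext i
    simp [wB, h i]
  · rw [if_neg, if_neg h]
    intro hc
    apply h
    intro i
    have := DFunLike.congr_fun hc i
    simpa [wB] using this

lemma lam_psi_pair (hp : 2 < p) (i' i0 : Fin 2 × (Fin (n+1) → Fin p)) :
    lam k p n hp (Psi k p n i'
        * (X 0 ^ (1 - (i0.1:ℕ)) * mu k n (fun t => (p-1) - (i0.2 t : ℕ))))
      = if i' = i0 then 1 else 0 := by
  have hcomb : Psi k p n i' * (X 0 ^ (1 - (i0.1:ℕ)) * mu k n (fun t => (p-1) - (i0.2 t:ℕ)))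
      = X 0 ^ ((i'.1:ℕ) + (1 - (i0.1:ℕ)))
        * mu k n ((fun t => (i'.2 t : ℕ)) + fun t => (p-1) - (i0.2 t:ℕ)) := by
    rw [Psi, mu_add, pow_add]
    ring
  rw [hcomb]
  have hv' : (i'.1:ℕ) < 2 := i'.1.isLt
  have hv0 : (i0.1:ℕ) < 2 := i0.1.isLt
  by_cases h1 : i'.1 = i0.1
  · have hE : (i'.1:ℕ) + (1 - (i0.1:ℕ)) = 2*0+1 := by
      rw [h1]; omega
    rw [hE, VAL1]
    simp only [pow_zero, one_mul]
    rw [coeff_wB_xp]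
    have hiff : (∀ t, ((fun t => (i'.2 t : ℕ)) + fun t => (p-1) - (i0.2 t:ℕ)) t = p - 1)
        ↔ i'.2 = i0.2 := by
      constructor
      · intro h
        funext t
        have h2 := h t
        simp only [Pi.add_apply] at h2
        have := (i'.2 t).isLt
        have := (i0.2 t).isLt
        exact Fin.ext (by omega)
      · intro h t
        rw [h]
        simp only [Pi.add_apply]
        have := (i0.2 t).isLt
        omega
    by_cases h2 : i'.2 = i0.2
    · rw [if_pos (hiff.mpr h2), if_pos (Prod.ext_iff.mpr ⟨h1, h2⟩)]
    · rw [if_neg (fun hc => h2 (hiff.mp hc)),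
        if_neg (fun hc => h2 (congrArg Prod.snd hc))]
  · have hne : i' ≠ i0 := fun hc => h1 (by rw [hc])
    rw [if_neg hne]
    have hvne : (i'.1:ℕ) ≠ (i0.1:ℕ) := fun hc => h1 (Fin.ext hc)
    have hE : (i'.1:ℕ) + (1 - (i0.1:ℕ)) = 2*0 ∨ (i'.1:ℕ) + (1 - (i0.1:ℕ)) = 2*1 := by
      omega
    rcases hE with hE | hE <;> rw [hE, VAL0]

def Dtop : ℕ := (n+1)*(p-1)+1

lemma perf (hp : 2 < p) (j : ℕ) (u : MvPolynomial (Fin (n+2)) k)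
    (hu : u ∈ homogeneousSubmodule (Fin (n+2)) k j)
    (H : ∀ g ∈ homogeneousSubmodule (Fin (n+2)) k (Dtop p n - j),
      lam k p n hp (u * g) = 0) :
    u ∈ IAdef k p n := by
  have hT := span_piece k p n hp j hu
  rw [Tsub, Submodule.mem_sup] at hT
  obtain ⟨h, hh, w, hw, hsum⟩ := hT
  rw [Finsupp.mem_span_image_iff_linearCombination] at hw
  obtain ⟨l, hl, rfl⟩ := hw
  rw [Submodule.restrictScalars_mem] at hh
  by_cases hl0 : l = 0
  · rw [← hsum, hl0]
    simpa using hh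
  · exfalso
    obtain ⟨i0, hi0⟩ := Finsupp.support_nonempty_iff.mpr hl0
    have hdegi : degi p n i0 = j := by
      exact (Finsupp.mem_supported k l).mp hl hi0
    set g := X 0 ^ (1 - (i0.1:ℕ)) * mu k n (fun t => (p-1) - (i0.2 t : ℕ)) with hgdef
    have hsum2 : (∑ t, ((p-1) - (i0.2 t : ℕ))) + ∑ t, (i0.2 t : ℕ) = (n+1)*(p-1) := by
      rw [← Finset.sum_add_distrib]
      have : ∀ t : Fin (n+1), ((p-1) - (i0.2 t:ℕ)) + (i0.2 t:ℕ) = p-1 := fun t => by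
        have := (i0.2 t).isLt
        omega
      simp only [this]
      simp [Finset.sum_const, mul_comm]
    have hgdeg : g ∈ homogeneousSubmodule (Fin (n+2)) k (Dtop p n - j) := by
      rw [mem_homogeneousSubmodule, hgdef]
      have hhom := homog_X0_mu k n (1 - (i0.1:ℕ)) (fun t => (p-1) - (i0.2 t:ℕ))
      have heq : (1 - (i0.1:ℕ)) + ∑ t, ((p-1) - (i0.2 t:ℕ)) = Dtop p n - j := by
        have hv0 : (i0.1:ℕ) < 2 := i0.1.isLt
        have hj : j = (i0.1:ℕ) + ∑ t, (i0.2 t:ℕ) := hdegi.symm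
        rw [Dtop]
        omega
      rwa [heq] at hhom
    have hval := H g hgdeg
    rw [← hsum, add_mul, map_add] at hval
    have h1 : lam k p n hp (h * g) = 0 := lam_IA_mul k p n hp g hh
    have h2 : lam k p n hp ((Finsupp.linearCombination k (Psi k p n) l) * g) = l i0 := by
      rw [Finsupp.linearCombination_apply, Finsupp.sum, Finset.sum_mul, map_sum]
      rw [Finset.sum_eq_single i0]
      · rw [smul_mul_assoc, map_smul, lam_psi_pair k p n hp i0 i0, if_pos rfl,
          smul_eq_mul, mul_one]
      · intro i' _ hne
        rw [smul_mul_assoc, map_smul, lam_psi_pair k p n hp i' i0, if_neg hne, smul_zero]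
      · intro habs
        exact absurd hi0 habs
    rw [h1, h2, zero_add] at hval
    exact Finsupp.mem_support_iff.mp hi0 hval

lemma fd_homog (N d : ℕ) : FiniteDimensional k ↥(homogeneousSubmodule (Fin N) k d) := by
  let L : ↥(homogeneousSubmodule (Fin N) k d) →ₗ[k] ((Fin N → Fin (d+1)) → k) :=
    { toFun := fun f v =>
        coeff (Finsupp.equivFunOnFinite.symm (fun i => (v i : ℕ))) (f : MvPolynomial (Fin N) k)
      map_add' := fun f g => by funext v; simp
      map_smul' := fun c f => by funext v; simp }
  have hinj : Function.Injective L := by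
    rw [← LinearMap.ker_eq_bot]
    rw [Submodule.eq_bot_iff]
    intro f hf
    apply Subtype.ext
    show (f : MvPolynomial (Fin N) k) = 0
    ext m
    rw [coeff_zero]
    by_contra hc
    have hhom := f.2
    rw [mem_homogeneousSubmodule] at hhom
    have hdeg : m.degree = d := by
      rw [Finsupp.degree_eq_weight_one]; exact hhom hc
    have hle : ∀ i, m i < d + 1 := fun i =>
      Nat.lt_succ_of_le (hdeg ▸ Finsupp.le_degree i m)
    have := congrFun (LinearMap.mem_ker.mp hf) (fun i => (⟨m i, hle i⟩ : Fin (d+1)))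
    simp only [L, LinearMap.coe_mk, AddHom.coe_mk, Pi.zero_apply] at this
    apply hc
    rw [← this]
    congr 1
    ext i
    simp
  exact FiniteDimensional.of_injective L hinj

noncomputable def ICdef : Ideal (MvPolynomial (Fin (n+2)) k) :=
  Submodule.colon (IAdef k p n) (Ideal.span {(X 0 : MvPolynomial (Fin (n+2)) k) ^ p})

lemma mem_ICdef (f : MvPolynomial (Fin (n+2)) k) :
    f ∈ ICdef k p n ↔ f * X 0 ^ p ∈ IAdef k p n := by
  rw [ICdef, Ideal.span, Submodule.mem_colon_span_singleton, smul_eq_mul]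

lemma lam_IA (hp : 2 < p) {h : MvPolynomial (Fin (n+2)) k} (hh : h ∈ IAdef k p n) :
    lam k p n hp h = 0 := by
  simpa using lam_IA_mul k p n hp 1 hh

noncomputable def bmap (hp : 2 < p) (i j : ℕ) :
    ↥(homogeneousSubmodule (Fin (n+2)) k i) →ₗ[k]
      ↥(homogeneousSubmodule (Fin (n+2)) k j) →ₗ[k] k :=
  LinearMap.mk₂ k
    (fun f g => lam k p n hp ((f : MvPolynomial (Fin (n+2)) k)
      * (g : MvPolynomial (Fin (n+2)) k) * X 0 ^ p))
    (fun f f' g => by rw [Submodule.coe_add, add_mul, add_mul, map_add])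
    (fun c f g => by rw [Submodule.coe_smul, smul_mul_assoc, smul_mul_assoc, map_smul])
    (fun f g g' => by rw [Submodule.coe_add, mul_add, add_mul, map_add])
    (fun c f g => by rw [Submodule.coe_smul, mul_smul_comm, smul_mul_assoc, map_smul])

lemma bmap_apply (hp : 2 < p) (i j : ℕ) (f : ↥(homogeneousSubmodule (Fin (n+2)) k i))
    (g : ↥(homogeneousSubmodule (Fin (n+2)) k j)) :
    bmap k p n hp i j f g = lam k p n hp ((f : MvPolynomial (Fin (n+2)) k)
      * (g : MvPolynomial (Fin (n+2)) k) * X 0 ^ p) := rfl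

lemma ker_bmap (hp : 2 < p) (i j : ℕ) (hij : i + j + p = Dtop p n) :
    LinearMap.ker (bmap k p n hp i j)
      = Submodule.comap (homogeneousSubmodule (Fin (n+2)) k i).subtype
          ((ICdef k p n).restrictScalars k) := by
  ext f
  simp only [LinearMap.mem_ker, Submodule.mem_comap, Submodule.subtype_apply,
    Submodule.restrictScalars_mem]
  constructor
  · intro hf
    rw [mem_ICdef]
    apply perf k p n hp (i + p)
    · exact (mem_homogeneousSubmodule _ _).mpr (((mem_homogeneousSubmodule _ _).mp f.2).mul
        (isHomogeneous_X_pow 0 p))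
    · intro g hg
      have hg' : g ∈ homogeneousSubmodule (Fin (n+2)) k j := by
        rwa [show Dtop p n - (i + p) = j by omega] at hg
      have hfg := LinearMap.congr_fun hf (⟨g, hg'⟩ :
        ↥(homogeneousSubmodule (Fin (n+2)) k j))
      rw [bmap_apply] at hfg
      rw [show (f:MvPolynomial (Fin (n+2)) k) * X 0 ^ p * g
          = (f:MvPolynomial (Fin (n+2)) k) * g * X 0 ^ p by ring]
      exact hfg
  · intro hf
    apply LinearMap.ext
    intro g
    rw [bmap_apply, LinearMap.zero_apply]
    apply lam_IA k p n hp
    rw [show (f:MvPolynomial (Fin (n+2)) k) * (g:MvPolynomial (Fin (n+2)) k) * X 0 ^ p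
        = ((f:MvPolynomial (Fin (n+2)) k) * X 0 ^ p) * (g:MvPolynomial (Fin (n+2)) k) by ring]
    exact Ideal.mul_mem_right _ _ ((mem_ICdef k p n _).mp hf)

lemma pieceDim_eq_rank (hp : 2 < p) (i j : ℕ) (hij : i + j + p = Dtop p n) :
    pieceDim (ICdef k p n) i
      = Module.finrank k ↥(LinearMap.range (bmap k p n hp i j)) := by
  rw [pieceDim, ← ker_bmap k p n hp i j hij]
  exact LinearEquiv.finrank_eq (LinearMap.quotKerEquivRange (bmap k p n hp i j))

lemma bmap_flip (hp : 2 < p) (i j : ℕ) :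
    (bmap k p n hp i j).flip = bmap k p n hp j i := by
  apply LinearMap.ext; intro g; apply LinearMap.ext; intro f
  show lam k p n hp ((f:MvPolynomial (Fin (n+2)) k) * (g:MvPolynomial (Fin (n+2)) k) * X 0 ^ p)
      = lam k p n hp ((g:MvPolynomial (Fin (n+2)) k) * (f:MvPolynomial (Fin (n+2)) k) * X 0 ^ p)
  rw [mul_comm (f : MvPolynomial (Fin (n+2)) k) (g : MvPolynomial (Fin (n+2)) k)]

lemma finrank_range_flip {V W : Type*} [AddCommGroup V] [Module k V]
    [AddCommGroup W] [Module k W] [FiniteDimensional k V] [FiniteDimensional k W]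
    (b : V →ₗ[k] W →ₗ[k] k) :
    Module.finrank k ↥(LinearMap.range b.flip)
      = Module.finrank k ↥(LinearMap.range b) := by
  have h : b.flip = (b.dualMap).comp (Module.Dual.eval k W) := rfl
  rw [h, LinearMap.range_comp_of_range_eq_top, LinearMap.finrank_range_dualMap_eq_finrank_range]
  rw [← Module.evalEquiv_toLinearMap]
  exact LinearEquiv.range _

lemma sym_nat (hp : 2 < p) (i j : ℕ) (hij : i + j + p = Dtop p n) :
    pieceDim (ICdef k p n) i = pieceDim (ICdef k p n) j := by
  haveI := fd_homog k (n+2) i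
  haveI := fd_homog k (n+2) j
  rw [pieceDim_eq_rank k p n hp i j hij, pieceDim_eq_rank k p n hp j i (by omega)]
  rw [← bmap_flip k p n hp i j, finrank_range_flip]

lemma high_vanish (hp : 2 < p) (d : ℕ) (hd : Dtop p n < d)
    {f : MvPolynomial (Fin (n+2)) k} (hf : f ∈ homogeneousSubmodule (Fin (n+2)) k d) :
    f ∈ IAdef k p n := by
  have h := span_piece k p n hp d hf
  have hempty : {j : Fin 2 × (Fin (n+1) → Fin p) | degi p n j = d} = ∅ := by
    ext i
    simp only [Set.mem_setOf_eq, Set.mem_empty_iff_false, iff_false]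
    intro hdi
    have h1 : (i.1:ℕ) < 2 := i.1.isLt
    have h2 : ∑ t, (i.2 t : ℕ) ≤ (n+1)*(p-1) := by
      calc ∑ t, (i.2 t:ℕ) ≤ ∑ _t : Fin (n+1), (p-1) :=
            Finset.sum_le_sum (fun t _ => by have := (i.2 t).isLt; omega)
        _ = (n+1)*(p-1) := by simp [mul_comm]
    rw [degi] at hdi
    rw [Dtop] at hd
    omega
  rw [Tsub, hempty] at h
  simpa using h

lemma IA_le_IC : IAdef k p n ≤ ICdef k p n := by
  intro r hr
  rw [mem_ICdef]
  exact Ideal.mul_mem_right _ _ hr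

lemma pieceDim_vanish (hp : 2 < p) (t : ℕ) (ht : n*(p-1) < t) :
    pieceDim (ICdef k p n) t = 0 := by
  rw [pieceDim]
  have htop : Submodule.comap (homogeneousSubmodule (Fin (n+2)) k t).subtype
      ((ICdef k p n).restrictScalars k) = ⊤ := by
    rw [Submodule.eq_top_iff']
    intro f
    simp only [Submodule.mem_comap, Submodule.subtype_apply, Submodule.restrictScalars_mem]
    rw [mem_ICdef]
    apply high_vanish k p n hp (t + p)
    · have hexp : (n+1)*(p-1) = n*(p-1) + (p-1) := by ring
      rw [Dtop]
      omega
    · exact (mem_homogeneousSubmodule _ _).mpr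
        (((mem_homogeneousSubmodule _ _).mp f.2).mul (isHomogeneous_X_pow 0 p))
  rw [htop]
  haveI : Subsingleton ((↥(homogeneousSubmodule (Fin (n+2)) k t)) ⧸
      (⊤ : Submodule k ↥(homogeneousSubmodule (Fin (n+2)) k t))) :=
    Submodule.Quotient.subsingleton_iff.mpr rfl
  exact Module.finrank_zero_of_subsingleton

lemma exsplit (u : Fin (n+1) → ℕ) : ∀ t, t ≤ ∑ i, u i →
    ∃ a : Fin (n+1) → ℕ, (∀ i, a i ≤ u i) ∧ ∑ i, a i = t := by
  intro t
  induction t with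
  | zero => exact fun _ => ⟨0, fun i => Nat.zero_le _, by simp⟩
  | succ t ih =>
    intro ht
    obtain ⟨a, ha, hsum⟩ := ih (by omega)
    have hlt : ∃ i, a i < u i := by
      by_contra hc
      push_neg at hc
      have : ∑ i, u i ≤ ∑ i, a i := Finset.sum_le_sum (fun i _ => hc i)
      omega
    obtain ⟨i, hi⟩ := hlt
    refine ⟨a + (Pi.single i 1 : Fin (n+1) → ℕ), fun j => ?_, ?_⟩
    · by_cases hji : j = i
      · subst hji
        simp only [Pi.add_apply, Pi.single_eq_same]
        omega
      · simp only [Pi.add_apply, Pi.single_eq_of_ne hji, add_zero]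
        exact ha j
    · simp only [Pi.add_apply, Finset.sum_add_distrib, sum_pi_single_two]
      omega

lemma pieceDim_pos (hp : 2 < p) (hodd : p % 2 = 1) (t : ℕ) (ht : t ≤ n*(p-1)) :
    pieceDim (ICdef k p n) t ≠ 0 := by
  haveI := fd_homog k (n+2) t
  set u0 : Fin (n+1) → ℕ := fun i => if i = 0 then 0 else p - 1 with hu0
  have hsumu : ∑ i, u0 i = n*(p-1) := by
    rw [Fin.sum_univ_succ]
    have h0 : u0 0 = 0 := rfl
    have hs : ∀ i : Fin n, u0 i.succ = p - 1 := fun i => by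
      simp [u0, Fin.succ_ne_zero]
    simp only [h0, hs, zero_add, Finset.sum_const, Finset.card_univ, Fintype.card_fin,
      smul_eq_mul]
  obtain ⟨a, ha, hsa⟩ := exsplit n u0 t (by omega)
  set b : Fin (n+1) → ℕ := fun i => u0 i - a i with hb
  have hmem : mu k n a ∈ homogeneousSubmodule (Fin (n+2)) k t := by
    have h := homog_X0_mu k n 0 a
    rw [pow_zero, one_mul, hsa] at h
    simpa using h
  have hnotin : mu k n a ∉ ICdef k p n := by
    intro hin
    have hIA : mu k n a * X 0 ^ p ∈ IAdef k p n := (mem_ICdef k p n _).mp hin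
    have h0 := lam_IA_mul k p n hp (mu k n b) hIA
    have hval : lam k p n hp ((mu k n a * X 0 ^ p) * mu k n b)
        = (-1:k)^((p-1)/2) := by
      rw [show (mu k n a * X 0 ^ p) * mu k n b
          = X 0 ^ (2*((p-1)/2)+1) * (mu k n a * mu k n b) by
        rw [show 2*((p-1)/2)+1 = p by omega]; ring]
      rw [← mu_add, show a + b = u0 from funext fun i => by
        simp only [Pi.add_apply, hb]; have := ha i; omega]
      rw [VAL1]
      have hw : wB p n = Finsupp.single 0 (2*((p-1)/2)) + Finsupp.equivFunOnFinite.symm u0 := by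
        ext i
        by_cases hi : i = 0
        · subst hi
          simp only [Finsupp.coe_add, Pi.add_apply, Finsupp.single_eq_same]
          have : u0 0 = 0 := rfl
          simp only [wB_apply, Finsupp.coe_equivFunOnFinite_symm, this]
          omega
        · simp only [Finsupp.coe_add, Pi.add_apply,
            Finsupp.single_eq_of_ne' (fun h => hi h.symm), zero_add, wB_apply,
            Finsupp.coe_equivFunOnFinite_symm]
          simp [u0, hi]
      rw [xp_eq_monomial, hw, coeff_mul_monomial, coeff_s1_pow, mul_one, mul_one]
    rw [h0] at hval
    exact pow_ne_zero _ (neg_ne_zero.mpr one_ne_zero) hval.symm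
  rw [pieceDim]
  have hne : Submodule.comap (homogeneousSubmodule (Fin (n+2)) k t).subtype
      ((ICdef k p n).restrictScalars k) ≠ ⊤ := by
    intro htop
    apply hnotin
    have : (⟨mu k n a, hmem⟩ : ↥(homogeneousSubmodule (Fin (n+2)) k t)) ∈
        Submodule.comap (homogeneousSubmodule (Fin (n+2)) k t).subtype
          ((ICdef k p n).restrictScalars k) := htop ▸ Submodule.mem_top
    simpa using this
  haveI := Submodule.Quotient.nontrivial_iff.mpr hne
  exact (Module.finrank_pos (R := k)).ne'

lemma fd_quotient (hp : 2 < p) :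
    FiniteDimensional k (MvPolynomial (Fin (n+2)) k ⧸ ICdef k p n) := by
  set mkl := (Ideal.Quotient.mkₐ k (ICdef k p n)).toLinearMap with hmkl
  have hspan : ∀ f : MvPolynomial (Fin (n+2)) k,
      mkl f ∈ Submodule.span k (Set.range fun i => mkl (Psi k p n i)) := by
    intro f
    rw [← sum_homogeneousComponent f, map_sum]
    refine Submodule.sum_mem _ fun d _ => ?_
    have hcomp := span_piece k p n hp d
      ((mem_homogeneousSubmodule _ _).mpr (homogeneousComponent_isHomogeneous d f))
    rw [Tsub, Submodule.mem_sup] at hcomp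
    obtain ⟨h, hh, w, hw, hsum⟩ := hcomp
    rw [← hsum, map_add]
    have h1 : mkl h = 0 := by
      rw [hmkl]
      simp only [AlgHom.toLinearMap_apply, Ideal.Quotient.mkₐ_eq_mk]
      rw [Ideal.Quotient.eq_zero_iff_mem]
      exact IA_le_IC k p n (Submodule.restrictScalars_mem _ _ _ |>.mp hh)
    rw [h1, zero_add]
    have h2 := Submodule.apply_mem_span_image_of_mem_span mkl hw
    refine Submodule.span_mono ?_ h2
    rintro x ⟨y, ⟨i, _, rfl⟩, rfl⟩
    exact ⟨i, rfl⟩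
  have htop : (⊤ : Submodule k (MvPolynomial (Fin (n+2)) k ⧸ ICdef k p n))
      = Submodule.span k (Set.range fun i => mkl (Psi k p n i)) := by
    rw [eq_comm, eq_top_iff]
    intro x _
    obtain ⟨f, rfl⟩ := Ideal.Quotient.mk_surjective x
    exact hspan f
  haveI hfd : FiniteDimensional k
      ↥(Submodule.span k (Set.range fun i => mkl (Psi k p n i))) :=
    FiniteDimensional.span_of_finite k (Set.finite_range _)
  exact Module.Finite.equiv
    ((LinearEquiv.ofEq _ _ htop.symm).trans Submodule.topEquiv)

end HilbC

open HilbC in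
/-- Part of Lemma 2.11 of the paper: `C = S/((∑x_i^2, x_1^p,…,x_N^p) : x_0^p)` is a graded
zero-dimensional (i.e. finite-dimensional over `k`) Gorenstein ring whose Hilbert function
is symmetric about `d_N = (N−1)(p−1)/2`: `dim C_{2d_N−i} = dim C_i` for all integers `i`,
and `C_i ≠ 0` iff `0 ≤ i ≤ 2d_N`. -/
theorem hilbert_function_C (k : Type*) [Field k] (p : ℕ) [Fact p.Prime] [CharP k p]
    (hp : 2 < p) (n : ℕ) (hn : 1 ≤ n)
    (IA : Ideal (MvPolynomial (Fin (n + 2)) k))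
    (hIA : IA = Ideal.span ({∑ i, X i ^ 2} ∪
      Set.range fun i : Fin (n + 1) => (X i.succ : MvPolynomial (Fin (n + 2)) k) ^ p))
    (IC : Ideal (MvPolynomial (Fin (n + 2)) k))
    (hIC : IC = Submodule.colon IA (Ideal.span {(X 0 : MvPolynomial (Fin (n + 2)) k) ^ p}))
    (dN : ℤ) (hdN : dN = (n : ℤ) * ((p : ℤ) - 1) / 2) :
    FiniteDimensional k (MvPolynomial (Fin (n + 2)) k ⧸ IC) ∧
      (∀ i : ℤ, pieceDimZ IC (2 * dN - i) = pieceDimZ IC i) ∧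
      (∀ i : ℤ, pieceDimZ IC i ≠ 0 ↔ 0 ≤ i ∧ i ≤ 2 * dN) := by
  have hodd : p % 2 = 1 :=
    Nat.odd_iff.mp ((Fact.out : p.Prime).odd_of_ne_two (by omega))
  have hIAd : IA = IAdef k p n := hIA
  have hICd : IC = ICdef k p n := by rw [hIC, hIAd]; rfl
  subst hICd
  set m := (p-1)/2 with hm
  have hpm : p - 1 = 2*m := by omega
  have hnat : n*(p-1) = 2*(n*m) := by rw [hpm]; ring
  have hdN' : dN = ((n*m : ℕ) : ℤ) := by
    rw [hdN]
    have h1 : ((p:ℤ) - 1) = ((2*m : ℕ) : ℤ) := by push_cast; omega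
    rw [h1]
    push_cast
    rw [show (n:ℤ) * (2*m) = (n*m) * 2 by ring]
    rw [Int.mul_ediv_cancel _ (by norm_num)]
  have h2dN : 2 * dN = ((n*(p-1) : ℕ) : ℤ) := by
    rw [hdN', hnat]; push_cast; ring
  have hDtop : n*(p-1) + p = Dtop p n := by
    rw [Dtop]
    have : (n+1)*(p-1) = n*(p-1)+(p-1) := by ring
    omega
  refine ⟨fd_quotient k p n hp, ?_, ?_⟩
  · intro i
    simp only [pieceDimZ]
    by_cases h0 : 0 ≤ i
    · by_cases h1 : i ≤ ((n*(p-1) : ℕ) : ℤ)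
      · rw [if_pos (by omega), if_pos h0]
        have hi1 : (2*dN - i).toNat = n*(p-1) - i.toNat := by omega
        rw [hi1]
        exact sym_nat k p n hp _ _ (by omega)
      · rw [if_neg (by omega), if_pos h0]
        exact (pieceDim_vanish k p n hp _ (by omega)).symm
    · rw [if_pos (by omega), if_neg h0]
      exact pieceDim_vanish k p n hp _ (by omega)
  · intro i
    simp only [pieceDimZ]
    constructor
    · intro hne
      by_cases h0 : 0 ≤ i
      · refine ⟨h0, ?_⟩
        rw [if_pos h0] at hne
        by_contra hgt
        push_neg at hgt
        exact hne (pieceDim_vanish k p n hp _ (by omega))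
      · rw [if_neg h0] at hne
        exact absurd rfl hne
    · rintro ⟨h0, h1⟩
      rw [if_pos h0]
      exact pieceDim_pos k p n hp hodd _ (by omega)
end

section
/- Define integer sequences by w_0 = 1 and w_{k+1} = ∑_{j=0}^{k} (−1)^j w_{k−j} C((q+1)/2 + j, 2j+2), and set F_k(i) = ∑_{j=0}^{k} (−1)^j w_{k−j} C(i+j, 2j+1). Similarly u_0 = 0, u_{k+1} = (−1)^k C((q+1)/2 + k, 2k+1) + ∑_{j=0}^{k} (−1)^j u_{k−j} C((q+1)/2 + j, 2j+2), and G_k(i) = (−1)^k C(i+k, 2k) + ∑_{j=0}^{k} (−1)^j u_{k−j} C(i+j, 2j+1). Then for odd q ≥ 3 and for i = 1,...,(q−1)/2: γ_N(i) = F_k(i) if N = 2k+2, and γ_N(i) = G_k(i) if N = 2k+1, where γ_N is defined by γ_1(i) = 1 for 1 ≤ i ≤ q−1, γ_N(0) = 0, γ_N(q−i) = γ_N(i), and γ_N(i) = ∑_{j=1}^{i} γ_{N−1}((q+1)/2 − j) for 1 ≤ i ≤ (q−1)/2. -/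
open Finset

/-- `w_0 = 1`, `w_{k+1} = ∑_{j=0}^{k} (−1)^j w_{k−j} C((q+1)/2 + j, 2j+2)`. -/
def wSeq (q : ℕ) : ℕ → ℤ
  | 0 => 1
  | k + 1 => ∑ j ∈ Finset.range (k + 1),
      (-1 : ℤ) ^ j * wSeq q (k - j) * (((q + 1) / 2 + j).choose (2 * j + 2) : ℤ)
decreasing_by exact Nat.lt_succ_of_le (Nat.sub_le k j)

/-- `u_0 = 0`, `u_{k+1} = (−1)^k C((q+1)/2 + k, 2k+1) + ∑_{j=0}^{k} (−1)^j u_{k−j} C((q+1)/2 + j, 2j+2)`. -/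
def uSeq (q : ℕ) : ℕ → ℤ
  | 0 => 0
  | k + 1 => (-1 : ℤ) ^ k * (((q + 1) / 2 + k).choose (2 * k + 1) : ℤ) +
      ∑ j ∈ Finset.range (k + 1),
        (-1 : ℤ) ^ j * uSeq q (k - j) * (((q + 1) / 2 + j).choose (2 * j + 2) : ℤ)
decreasing_by exact Nat.lt_succ_of_le (Nat.sub_le k j)

/-- `F_k(i) = ∑_{j=0}^{k} (−1)^j w_{k−j} C(i+j, 2j+1)`. -/
noncomputable def Fcl (q k i : ℕ) : ℚ :=
  ∑ j ∈ Finset.range (k + 1), (-1 : ℚ) ^ j * (wSeq q (k - j) : ℚ) * ((i + j).choose (2 * j + 1) : ℚ)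

/-- `G_k(i) = (−1)^k C(i+k, 2k) + ∑_{j=0}^{k} (−1)^j u_{k−j} C(i+j, 2j+1)`. -/
noncomputable def Gcl (q k i : ℕ) : ℚ :=
  (-1 : ℚ) ^ k * ((i + k).choose (2 * k) : ℚ) +
    ∑ j ∈ Finset.range (k + 1), (-1 : ℚ) ^ j * (uSeq q (k - j) : ℚ) * ((i + j).choose (2 * j + 1) : ℚ)

lemma pascalQ (n k : ℕ) : (((n+1).choose (k+1) : ℚ)) = (n.choose k : ℚ) + (n.choose (k+1) : ℚ) := by
  rw [Nat.choose_succ_succ]; push_cast; ring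

lemma hockeyQ (a b i M : ℕ) (h : i ≤ M) :
    ∑ t ∈ Finset.Ico i M, ((t+a).choose b : ℚ) =
      ((M+a).choose (b+1) : ℚ) - ((i+a).choose (b+1) : ℚ) := by
  induction M, h using Nat.le_induction with
  | base => simp
  | succ M hM ih =>
      rw [Finset.sum_Ico_succ_top hM, ih]
      have h2 : M+1+a = (M+a)+1 := by omega
      rw [h2, pascalQ]; ring

lemma reflect_sum (m t : ℕ) (ht : t < m) (f : ℕ → ℚ) :
    ∑ l ∈ Finset.Icc 1 t, f (m - l) = ∑ s ∈ Finset.Ico (m - t) m, f s := by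
  induction t with
  | zero => simp
  | succ t ih =>
      rw [Finset.sum_Icc_succ_top (by omega : 1 ≤ t+1), ih (by omega)]
      rw [Finset.sum_eq_sum_Ico_succ_bot (by omega : m - (t+1) < m)]
      have h2 : m - (t+1) + 1 = m - t := by omega
      rw [h2]; ring

lemma Fcl_succ_sub (q k i : ℕ) :
    Fcl q (k+1) (i+1) - Fcl q (k+1) i =
      (wSeq q (k+1) : ℚ) -
        ∑ j ∈ Finset.range (k+1),
          (-1:ℚ)^j * (wSeq q (k-j) : ℚ) * (((i+1)+j).choose (2*j+2) : ℚ) := by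
  unfold Fcl
  rw [← Finset.sum_sub_distrib]
  have h1 : ∀ j ∈ Finset.range (k+2),
      (-1:ℚ)^j * (wSeq q (k+1-j) : ℚ) * (((i+1)+j).choose (2*j+1) : ℚ) -
      (-1:ℚ)^j * (wSeq q (k+1-j) : ℚ) * ((i+j).choose (2*j+1) : ℚ) =
      (-1:ℚ)^j * (wSeq q (k+1-j) : ℚ) * ((i+j).choose (2*j) : ℚ) := by
    intro j _
    have h : i+1+j = (i+j)+1 := by omega
    rw [h, pascalQ]; ring
  rw [Finset.sum_congr rfl h1, Finset.sum_range_succ']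
  have h2 : ∀ j ∈ Finset.range (k+1),
      (-1:ℚ)^(j+1) * (wSeq q (k+1-(j+1)) : ℚ) * ((i+(j+1)).choose (2*(j+1)) : ℚ) =
      -((-1:ℚ)^j * (wSeq q (k-j) : ℚ) * (((i+1)+j).choose (2*j+2) : ℚ)) := by
    intro j _
    have e1 : k+1-(j+1) = k-j := by omega
    have e2 : i+(j+1) = (i+1)+j := by omega
    have e3 : 2*(j+1) = 2*j+2 := by omega
    rw [e1, e2, e3]; ring
  rw [Finset.sum_congr rfl h2, Finset.sum_neg_distrib]
  simp [Nat.choose]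
  ring

lemma Gcl_succ_sub (q k i : ℕ) :
    Gcl q (k+1) (i+1) - Gcl q (k+1) i =
      (uSeq q (k+1) : ℚ) - (-1:ℚ)^k * (((i+1)+k).choose (2*k+1) : ℚ) -
        ∑ j ∈ Finset.range (k+1),
          (-1:ℚ)^j * (uSeq q (k-j) : ℚ) * (((i+1)+j).choose (2*j+2) : ℚ) := by
  unfold Gcl
  have hc : (((i+1)+(k+1)).choose (2*(k+1)) : ℚ) =
      ((i+(k+1)).choose (2*k+1) : ℚ) + ((i+(k+1)).choose (2*(k+1)) : ℚ) := by
    have h : (i+1)+(k+1) = (i+(k+1))+1 := by omega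
    have h2 : 2*(k+1) = (2*k+1)+1 := by omega
    rw [h, h2, pascalQ]
  rw [hc]
  have h1 : ∀ j ∈ Finset.range (k+2),
      (-1:ℚ)^j * (uSeq q (k+1-j) : ℚ) * (((i+1)+j).choose (2*j+1) : ℚ) =
      (-1:ℚ)^j * (uSeq q (k+1-j) : ℚ) * ((i+j).choose (2*j+1) : ℚ) +
      (-1:ℚ)^j * (uSeq q (k+1-j) : ℚ) * ((i+j).choose (2*j) : ℚ) := by
    intro j _
    have h : i+1+j = (i+j)+1 := by omega
    rw [h, pascalQ]; ring
  rw [Finset.sum_congr rfl h1, Finset.sum_add_distrib, Finset.sum_range_succ' (f := fun j =>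
    (-1:ℚ)^j * (uSeq q (k+1-j) : ℚ) * ((i+j).choose (2*j) : ℚ))]
  have h2 : ∀ j ∈ Finset.range (k+1),
      (-1:ℚ)^(j+1) * (uSeq q (k+1-(j+1)) : ℚ) * ((i+(j+1)).choose (2*(j+1)) : ℚ) =
      -((-1:ℚ)^j * (uSeq q (k-j) : ℚ) * (((i+1)+j).choose (2*j+2) : ℚ)) := by
    intro j _
    have e1 : k+1-(j+1) = k-j := by omega
    have e2 : i+(j+1) = (i+1)+j := by omega
    have e3 : 2*(j+1) = 2*j+2 := by omega
    rw [e1, e2, e3]; ring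
  rw [Finset.sum_congr rfl h2, Finset.sum_neg_distrib]
  have e4 : i+1+k = i+(k+1) := by omega
  rw [e4]
  simp [Nat.choose]
  ring

lemma sum_Fcl (q k i : ℕ) (h : i + 1 ≤ (q+1)/2) :
    ∑ t ∈ Finset.Ico (i+1) ((q+1)/2), Fcl q k t =
      (wSeq q (k+1) : ℚ) -
        ∑ j ∈ Finset.range (k+1),
          (-1:ℚ)^j * (wSeq q (k-j) : ℚ) * (((i+1)+j).choose (2*j+2) : ℚ) := by
  unfold Fcl
  rw [Finset.sum_comm]
  have h1 : ∀ j ∈ Finset.range (k+1),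
      ∑ t ∈ Finset.Ico (i+1) ((q+1)/2),
        (-1:ℚ)^j * (wSeq q (k-j) : ℚ) * ((t+j).choose (2*j+1) : ℚ) =
      (-1:ℚ)^j * (wSeq q (k-j) : ℚ) * (((q+1)/2+j).choose (2*j+2) : ℚ) -
      (-1:ℚ)^j * (wSeq q (k-j) : ℚ) * (((i+1)+j).choose (2*j+2) : ℚ) := by
    intro j _
    rw [← Finset.mul_sum, hockeyQ j (2*j+1) (i+1) ((q+1)/2) h]
    ring
  rw [Finset.sum_congr rfl h1, Finset.sum_sub_distrib]
  have h2 : (wSeq q (k+1) : ℚ) =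
      ∑ j ∈ Finset.range (k+1),
        (-1:ℚ)^j * (wSeq q (k-j) : ℚ) * (((q+1)/2+j).choose (2*j+2) : ℚ) := by
    rw [wSeq]; push_cast; rfl
  rw [h2]

lemma sum_Gcl (q k i : ℕ) (h : i + 1 ≤ (q+1)/2) :
    ∑ t ∈ Finset.Ico (i+1) ((q+1)/2), Gcl q k t =
      (uSeq q (k+1) : ℚ) - (-1:ℚ)^k * (((i+1)+k).choose (2*k+1) : ℚ) -
        ∑ j ∈ Finset.range (k+1),
          (-1:ℚ)^j * (uSeq q (k-j) : ℚ) * (((i+1)+j).choose (2*j+2) : ℚ) := by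
  unfold Gcl
  rw [Finset.sum_add_distrib, Finset.sum_comm]
  have h0 : ∑ t ∈ Finset.Ico (i+1) ((q+1)/2), (-1:ℚ)^k * ((t+k).choose (2*k) : ℚ) =
      (-1:ℚ)^k * (((q+1)/2+k).choose (2*k+1) : ℚ) -
      (-1:ℚ)^k * (((i+1)+k).choose (2*k+1) : ℚ) := by
    rw [← Finset.mul_sum, hockeyQ k (2*k) (i+1) ((q+1)/2) h]
    ring
  have h1 : ∀ j ∈ Finset.range (k+1),
      ∑ t ∈ Finset.Ico (i+1) ((q+1)/2),
        (-1:ℚ)^j * (uSeq q (k-j) : ℚ) * ((t+j).choose (2*j+1) : ℚ) =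
      (-1:ℚ)^j * (uSeq q (k-j) : ℚ) * (((q+1)/2+j).choose (2*j+2) : ℚ) -
      (-1:ℚ)^j * (uSeq q (k-j) : ℚ) * (((i+1)+j).choose (2*j+2) : ℚ) := by
    intro j _
    rw [← Finset.mul_sum, hockeyQ j (2*j+1) (i+1) ((q+1)/2) h]
    ring
  rw [h0, Finset.sum_congr rfl h1, Finset.sum_sub_distrib]
  have h2 : (uSeq q (k+1) : ℚ) =
      (-1:ℚ)^k * (((q+1)/2+k).choose (2*k+1) : ℚ) +
      ∑ j ∈ Finset.range (k+1),
        (-1:ℚ)^j * (uSeq q (k-j) : ℚ) * (((q+1)/2+j).choose (2*j+2) : ℚ) := by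
    rw [uSeq]; push_cast; rfl
  rw [h2]
  ring

lemma Fcl_zero (q k : ℕ) : Fcl q k 0 = 0 := by
  unfold Fcl
  apply Finset.sum_eq_zero
  intro j _
  rw [Nat.zero_add, Nat.choose_eq_zero_of_lt (by omega)]
  simp

lemma Gcl_succ_zero (q k : ℕ) : Gcl q (k+1) 0 = 0 := by
  unfold Gcl
  rw [Nat.zero_add, Nat.choose_eq_zero_of_lt (by omega)]
  have h : ∀ j ∈ Finset.range (k+2),
      (-1:ℚ)^j * (uSeq q (k+1-j) : ℚ) * ((0+j).choose (2*j+1) : ℚ) = 0 := by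
    intro j _
    rw [Nat.zero_add, Nat.choose_eq_zero_of_lt (by omega)]
    simp
  rw [Finset.sum_eq_zero h]
  simp

/-- The closed-form part of Lemma 2.8 of the paper: if `γ_N` is defined by `γ_1(i) = 1` for
`1 ≤ i ≤ q−1`, `γ_N(0) = 0`, `γ_N(q−i) = γ_N(i)` and
`γ_N(i) = ∑_{j=1}^{i} γ_{N−1}((q+1)/2 − j)` for `1 ≤ i ≤ (q−1)/2`, then for odd `q ≥ 3` and
`i = 1,…,(q−1)/2`: `γ_N(i) = F_k(i)` if `N = 2k+2`, and `γ_N(i) = G_k(i)` if `N = 2k+1`. -/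
theorem gam_closed_form (q : ℕ) (hq : Odd q) (hq3 : 3 ≤ q) (γ : ℕ → ℕ → ℚ)
    (hbase1 : ∀ i : ℕ, 1 ≤ i → i ≤ q - 1 → γ 1 i = 1)
    (hzero : ∀ N : ℕ, 1 ≤ N → γ N 0 = 0)
    (hsym : ∀ N : ℕ, 1 ≤ N → ∀ i : ℕ, 1 ≤ i → i ≤ q - 1 → γ N (q - i) = γ N i)
    (hrec : ∀ N : ℕ, 2 ≤ N → ∀ i : ℕ, 1 ≤ i → 2 * i ≤ q - 1 →
      γ N i = ∑ j ∈ Finset.Icc 1 i, γ (N - 1) ((q + 1) / 2 - j)) :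
    ∀ N k i : ℕ, 1 ≤ i → 2 * i ≤ q - 1 →
      (N = 2 * k + 2 → γ N i = Fcl q k i) ∧ (N = 2 * k + 1 → γ N i = Gcl q k i) := by
  obtain ⟨r, hqr⟩ := hq
  have hr1 : 1 ≤ r := by omega
  have hm : (q+1)/2 = r+1 := by omega
  have hq1 : q - 1 = 2*r := by omega
  -- one-step difference for γ
  have gstep : ∀ N, 2 ≤ N → ∀ i, i + 1 ≤ r →
      γ N (i+1) = γ N i + γ (N-1) ((q+1)/2 - (i+1)) := by
    intro N hN i hi
    have h1 := hrec N hN (i+1) (by omega) (by omega)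
    rw [Finset.sum_Icc_succ_top (by omega : (1:ℕ) ≤ i+1)] at h1
    rcases Nat.eq_zero_or_pos i with h | h
    · subst h
      rw [Finset.Icc_eq_empty (by omega), Finset.sum_empty] at h1
      rw [h1, hzero N (by omega)]
    · rw [← hrec N hN i (by omega) (by omega)] at h1
      exact h1
  -- main induction on k
  have main : ∀ k, (∀ i, 1 ≤ i → i ≤ r → γ (2*k+1) i = Gcl q k i) ∧
      (∀ i, 1 ≤ i → i ≤ r → γ (2*k+2) i = Fcl q k i) := by
    intro k
    induction k with
    | zero =>
      constructor
      · intro i hi1 hi2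
        rw [hbase1 i hi1 (by omega)]
        unfold Gcl
        simp [uSeq]
      · intro i hi1 hi2
        have h1 := hrec 2 (le_refl 2) i hi1 (by omega)
        have h2 : ∀ j ∈ Finset.Icc 1 i, γ (2-1) ((q+1)/2 - j) = 1 := by
          intro j hj
          rw [Finset.mem_Icc] at hj
          exact hbase1 _ (by omega) (by omega)
        rw [Finset.sum_congr rfl h2, Finset.sum_const, Nat.card_Icc] at h1
        rw [h1]
        unfold Fcl
        simp [wSeq, Nat.choose_one_right]
    | succ k ih =>
      obtain ⟨ihG, ihF⟩ := ih
      have hms : ∀ i : ℕ, i + 1 ≤ r → (q+1)/2 - ((q+1)/2 - (i+1)) = i+1 := by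
        intro i hi; omega
      constructor
      · -- odd part: γ (2k+3) = Gcl (k+1)
        have H : ∀ i, i ≤ r → γ (2*(k+1)+1) i = Gcl q (k+1) i := by
          intro i
          induction i with
          | zero =>
            intro _
            rw [hzero _ (by omega), Gcl_succ_zero]
          | succ i ihi =>
            intro hi
            have e1 : 2*(k+1)+1 = 2*k+3 := by omega
            rw [e1] at ihi ⊢
            rw [gstep (2*k+3) (by omega) i hi, ihi (by omega)]
            have e2 : 2*k+3-1 = 2*k+2 := by omega
            rw [e2]
            -- evaluate γ (2k+2) at (q+1)/2 - (i+1)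
            have h2 := hrec (2*k+2) (by omega) ((q+1)/2 - (i+1)) (by omega) (by omega)
            have e3 : 2*k+2-1 = 2*k+1 := by omega
            rw [e3] at h2
            have h3 : ∀ l ∈ Finset.Icc 1 ((q+1)/2 - (i+1)),
                γ (2*k+1) ((q+1)/2 - l) = Gcl q k ((q+1)/2 - l) := by
              intro l hl
              rw [Finset.mem_Icc] at hl
              exact ihG _ (by omega) (by omega)
            rw [Finset.sum_congr rfl h3,
              reflect_sum ((q+1)/2) ((q+1)/2 - (i+1)) (by omega) (Gcl q k),
              hms i hi, sum_Gcl q k i (by omega)] at h2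
            rw [h2]
            have h4 := Gcl_succ_sub q k i
            linarith
        intro i hi1 hi2
        exact H i hi2
      · -- even part: γ (2k+4) = Fcl (k+1)
        have H : ∀ i, i ≤ r → γ (2*(k+1)+2) i = Fcl q (k+1) i := by
          intro i
          induction i with
          | zero =>
            intro _
            rw [hzero _ (by omega), Fcl_zero]
          | succ i ihi =>
            intro hi
            have e1 : 2*(k+1)+2 = 2*k+4 := by omega
            rw [e1] at ihi ⊢
            rw [gstep (2*k+4) (by omega) i hi, ihi (by omega)]
            have e2 : 2*k+4-1 = 2*k+3 := by omega
            rw [e2]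
            have h2 := hrec (2*k+3) (by omega) ((q+1)/2 - (i+1)) (by omega) (by omega)
            have e3 : 2*k+3-1 = 2*k+2 := by omega
            rw [e3] at h2
            have h3 : ∀ l ∈ Finset.Icc 1 ((q+1)/2 - (i+1)),
                γ (2*k+2) ((q+1)/2 - l) = Fcl q k ((q+1)/2 - l) := by
              intro l hl
              rw [Finset.mem_Icc] at hl
              exact ihF _ (by omega) (by omega)
            rw [Finset.sum_congr rfl h3,
              reflect_sum ((q+1)/2) ((q+1)/2 - (i+1)) (by omega) (Fcl q k),
              hms i hi, sum_Fcl q k i (by omega)] at h2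
            rw [h2]
            have h4 := Fcl_succ_sub q k i
            linarith
        intro i hi1 hi2
        exact H i hi2
  intro N k i hi1 hi2
  constructor
  · intro hN; subst hN
    exact (main k).2 i hi1 (by omega)
  · intro hN; subst hN
    exact (main k).1 i hi1 (by omega)
end
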